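/- arXiv:math/0512025 — 2 statements merged into one kernel-verified Lean document; each statement's English description precedes it below -/
import Mathlib

section
/- Let H be a Hilbert space, Y a locally compact Hausdorff space, and A: Y → B(H) a bounded continuous operator family. If A(y) is Fredholm for all y, invertible outside a compact subset of Y with uniformly bounded inverse, then the image of A in the quotient C*-algebra C_b(Y, B(H)) / C_0(Y, K(H)) is invertible, and conversely. -/
open Filter Topology

/-- A bounded operator on a Hilbert space is Fredholm if it has finite-dimensional
kernel, closed range and finite-dimensional cokernel. -/
def IsFredholmOp {H : Type*} [NormedAddCommGroup H] [InnerProductSpace ℂ H] [CompleteSpace H]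
    (T : H →L[ℂ] H) : Prop :=
  FiniteDimensional ℂ (LinearMap.ker (T : H →ₗ[ℂ] H)) ∧ IsClosed (LinearMap.range (T : H →ₗ[ℂ] H) : Set H) ∧
    FiniteDimensional ℂ (H ⧸ LinearMap.range (T : H →ₗ[ℂ] H))

/-- Membership in the ideal `C₀(Y, K(H))` of compact-operator-valued families
tending to zero in norm at infinity. -/
def MemCzeroK {H : Type*} [NormedAddCommGroup H] [InnerProductSpace ℂ H] [CompleteSpace H]
    {Y : Type*} [TopologicalSpace Y] (D : Y → H →L[ℂ] H) : Prop :=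
  (∀ y, IsCompactOperator ⇑(D y)) ∧ Tendsto (fun y => ‖D y‖) (cocompact Y) (𝓝 0)


section AuxiliaryFredholm

open Set

set_option linter.unusedSectionVars false

variable {H : Type*} [NormedAddCommGroup H] [InnerProductSpace ℂ H] [CompleteSpace H]

/-- Neumann series bound. -/
lemma neumann_aux (t : H →L[ℂ] H) (h : ‖t‖ ≤ 1/2) :
    IsUnit (1 + t) ∧ ‖Ring.inverse (1 + t)‖ ≤ 2 := by
  have h1 : ‖(-t)‖ < 1 := by rw [norm_neg]; linarith
  have hu : IsUnit (1 + t) := by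
    have := isUnit_one_sub_of_norm_lt_one h1
    simpa using this
  refine ⟨hu, ?_⟩
  have hinv : Ring.inverse (1 + t) = ∑' i : ℕ, (-t) ^ i := by
    have := geom_series_eq_inverse (-t) h1
    rw [this]; congr 1; abel
  rw [hinv]
  calc ‖∑' i : ℕ, (-t) ^ i‖ ≤ ‖(1 : H →L[ℂ] H)‖ - 1 + (1 - ‖-t‖)⁻¹ :=
        tsum_geometric_le_of_norm_lt_one _ h1
    _ ≤ 2 := by
        have hone : ‖(1 : H →L[ℂ] H)‖ ≤ 1 := ContinuousLinearMap.norm_id_le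
        rw [norm_neg]
        have h2 : (1 - ‖t‖)⁻¹ ≤ 2 := by
          rw [inv_le_comm₀ (by linarith) (by norm_num)]
          linarith
        linarith

/-- An operator with range inside a finite-dimensional submodule is compact. -/
lemma isCompactOperator_of_mem_finiteDimensional (f : H →L[ℂ] H) (K : Submodule ℂ H)
    [FiniteDimensional ℂ K] (h : ∀ x, f x ∈ K) : IsCompactOperator ⇑f := by
  haveI : ProperSpace K := FiniteDimensional.proper ℂ K
  set D : Set H := ((↑) : K → H) '' Metric.closedBall 0 ‖f‖ with hD
  have hDc : IsCompact D := (isCompact_closedBall _ _).image continuous_subtype_val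
  rw [isCompactOperator_iff_exists_mem_nhds_image_subset_compact]
  refine ⟨Metric.ball 0 1, Metric.ball_mem_nhds _ one_pos, D, hDc, ?_⟩
  intro x hx
  obtain ⟨y, hy, rfl⟩ := hx
  refine ⟨⟨f y, h y⟩, ?_, rfl⟩
  simp only [Metric.mem_closedBall, dist_zero_right]
  calc ‖(⟨f y, h y⟩ : K)‖ = ‖f y‖ := rfl
    _ ≤ ‖f‖ * ‖y‖ := f.le_opNorm y
    _ ≤ ‖f‖ * 1 := by
        have := (Metric.mem_ball.mp hy)
        rw [dist_zero_right] at this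
        exact mul_le_mul_of_nonneg_left this.le (norm_nonneg f)
    _ = ‖f‖ := mul_one _

/-- A closed subspace on which a compact operator restricts to the identity
is finite dimensional. -/
lemma finiteDimensional_of_isCompactOperator_fix (p : Submodule ℂ H)
    (hp : IsClosed (p : Set H)) (u : H →L[ℂ] H) (hu : IsCompactOperator ⇑u)
    (hfix : ∀ x ∈ p, u x = x) : FiniteDimensional ℂ p := by
  have hcls : IsCompact (closure (⇑u '' Metric.closedBall 0 1)) := by
    have := hu.isCompact_closure_image_closedBall (𝕜₁ := ℂ) (f := (u : H →ₗ[ℂ] H)) 1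
    · simpa using this
  set D : Set H := (p : Set H) ∩ Metric.closedBall 0 1 with hDdef
  have hDsub : D ⊆ closure (⇑u '' Metric.closedBall 0 1) := by
    rintro x ⟨hxp, hxb⟩
    exact subset_closure ⟨x, hxb, hfix x hxp⟩
  have hDc : IsCompact D :=
    hcls.of_isClosed_subset (hp.inter Metric.isClosed_closedBall) hDsub
  have hball : IsCompact (Metric.closedBall (0 : p) 1) := by
    rw [Subtype.isCompact_iff]
    convert hDc using 1
    ext x
    constructor
    · rintro ⟨y, hy, rfl⟩
      rw [Metric.mem_closedBall, dist_zero_right] at hy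
      exact ⟨y.2, by rwa [Metric.mem_closedBall, dist_zero_right]⟩
    · rintro ⟨hxp, hxb⟩
      rw [Metric.mem_closedBall, dist_zero_right] at hxb
      exact ⟨⟨x, hxp⟩, by rwa [Metric.mem_closedBall, dist_zero_right], rfl⟩
  exact FiniteDimensional.of_isCompact_closedBall₀ ℂ one_pos hball
variable {H : Type*} [NormedAddCommGroup H] [InnerProductSpace ℂ H] [CompleteSpace H]

local notation "⟪" x ", " y "⟫" => @inner ℂ _ _ x y

/-- Schauder's theorem for Hilbert spaces: the adjoint of a compact operator is compact. -/
lemma isCompactOperator_adjoint (u : H →L[ℂ] H) (hu : IsCompactOperator ⇑u) :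
    IsCompactOperator ⇑(ContinuousLinearMap.adjoint u) := by
  set v := ContinuousLinearMap.adjoint u with hv
  have hvlin : IsCompactOperator ⇑(v : H →ₗ[ℂ] H) → IsCompactOperator ⇑v := by
    intro h; simpa using h
  have key : IsCompact (closure (⇑v '' Metric.closedBall 0 1)) := by
    set S : Set H := ⇑v '' Metric.closedBall 0 1 with hS
    -- the compact set containing u '' (closedBall 0 ‖v‖)
    have hC : IsCompact (closure (⇑u '' Metric.closedBall 0 ‖v‖)) := by
      have := hu.isCompact_closure_image_closedBall (𝕜₁ := ℂ) (f := (u : H →ₗ[ℂ] H)) ‖v‖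
      simpa using this
    have hseq : IsSeqCompact (closure S) := by
      intro z hz
      -- approximate by elements of S
      have happrox : ∀ n : ℕ, ∃ w ∈ S, dist (z n) w < 1 / (n + 1) := by
        intro n
        exact Metric.mem_closure_iff.mp (hz n) _ (by positivity)
      choose w hwS hwz using happrox
      choose x hx hxw using hwS
      -- q n := u (w n) lies in a compact set
      have hq : ∀ n, u (w n) ∈ closure (⇑u '' Metric.closedBall 0 ‖v‖) := by
        intro n
        refine subset_closure ⟨w n, ?_, rfl⟩
        rw [Metric.mem_closedBall, dist_zero_right]
        rw [← hxw n]
        calc ‖v (x n)‖ ≤ ‖v‖ * ‖x n‖ := v.le_opNorm _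
          _ ≤ ‖v‖ * 1 := by
              refine mul_le_mul_of_nonneg_left ?_ (norm_nonneg v)
              have := hx n; rwa [Metric.mem_closedBall, dist_zero_right] at this
          _ = ‖v‖ := mul_one _
      obtain ⟨L, _, φ, hφ, hqφ⟩ := hC.isSeqCompact hq
      -- w ∘ φ is Cauchy
      have hkey : ∀ i j, ‖w i - w j‖ ^ 2 ≤ 2 * ‖u (w i) - u (w j)‖ := by
        intro i j
        have h1 : w i - w j = v (x i - x j) := by
          rw [map_sub, hxw i, hxw j]
        have h2 : ‖w i - w j‖ ^ 2 = RCLike.re ⟪w i - w j, w i - w j⟫ := by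
          rw [@inner_self_eq_norm_sq ℂ]
        have h3 : ⟪w i - w j, w i - w j⟫ = ⟪x i - x j, u (w i - w j)⟫ := by
          nth_rewrite 1 [h1]
          exact ContinuousLinearMap.adjoint_inner_left u (w i - w j) (x i - x j)
        have h4 : RCLike.re ⟪x i - x j, u (w i - w j)⟫ ≤ ‖x i - x j‖ * ‖u (w i - w j)‖ := by
          refine le_trans ?_ (norm_inner_le_norm (𝕜 := ℂ) _ _)
          exact RCLike.re_le_norm _
        have h5 : ‖x i - x j‖ ≤ 2 := by
          have hi := hx i; have hj := hx j
          rw [Metric.mem_closedBall, dist_zero_right] at hi hj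
          calc ‖x i - x j‖ ≤ ‖x i‖ + ‖x j‖ := norm_sub_le _ _
            _ ≤ 2 := by linarith
        have h6 : u (w i - w j) = u (w i) - u (w j) := map_sub _ _ _
        rw [h2, h3]
        calc RCLike.re ⟪x i - x j, u (w i - w j)⟫ ≤ ‖x i - x j‖ * ‖u (w i - w j)‖ := h4
          _ ≤ 2 * ‖u (w i) - u (w j)‖ := by
              rw [h6]
              exact mul_le_mul_of_nonneg_right h5 (by positivity) |>.trans_eq rfl
      have hcauchy : CauchySeq (w ∘ φ) := by
        rw [Metric.cauchySeq_iff]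
        intro ε hε
        have hqc : CauchySeq ((fun n => u (w n)) ∘ φ) := hqφ.cauchySeq
        rw [Metric.cauchySeq_iff] at hqc
        obtain ⟨N, hN⟩ := hqc (ε ^ 2 / 2) (by positivity)
        refine ⟨N, fun m hm n hn => ?_⟩
        have := hkey (φ m) (φ n)
        have hd : dist (u (w (φ m))) (u (w (φ n))) < ε ^ 2 / 2 := hN m hm n hn
        rw [dist_eq_norm] at hd ⊢
        have h7 : ‖w (φ m) - w (φ n)‖ ^ 2 < ε ^ 2 := by
          calc ‖w (φ m) - w (φ n)‖ ^ 2 ≤ 2 * ‖u (w (φ m)) - u (w (φ n))‖ := this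
            _ < 2 * (ε ^ 2 / 2) := by linarith
            _ = ε ^ 2 := by ring
        exact lt_of_pow_lt_pow_left₀ 2 hε.le h7
      obtain ⟨a, ha⟩ := cauchySeq_tendsto_of_complete hcauchy
      refine ⟨a, ?_, φ, hφ, ?_⟩
      · exact isClosed_closure.mem_of_tendsto ha
          (Eventually.of_forall fun n => subset_closure ⟨x (φ n), hx _, hxw _⟩)
      · -- z ∘ φ → a as well
        have hdz : Tendsto (fun n => dist (z (φ n)) (w (φ n))) atTop (𝓝 0) := by
          have hb : Tendsto (fun n : ℕ => 1 / ((φ n : ℝ) + 1)) atTop (𝓝 0) := by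
            apply Tendsto.comp (g := fun m : ℕ => 1 / ((m : ℝ) + 1))
              tendsto_one_div_add_atTop_nhds_zero_nat hφ.tendsto_atTop
        -- squeeze
          refine squeeze_zero (fun n => dist_nonneg) (fun n => (hwz (φ n)).le) hb
        exact Tendsto.congr_dist (f₁ := w ∘ φ) ha (by simpa [Function.comp, dist_comm] using hdz)
    exact hseq.isCompact
  have := (isCompactOperator_iff_isCompact_closure_image_closedBall (𝕜₁ := ℂ)
    (f := (v : H →ₗ[ℂ] H)) one_pos).mpr (by simpa using key)
  exact hvlin this

/-- Reverse Atkinson: an operator invertible modulo compact operators is Fredholm. -/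
lemma isFredholmOp_of_inverse_mod_compact (T B : H →L[ℂ] H)
    (h1 : IsCompactOperator ⇑(T ∘L B - 1)) (h2 : IsCompactOperator ⇑(B ∘L T - 1)) :
    FiniteDimensional ℂ (LinearMap.ker (T : H →ₗ[ℂ] H)) ∧ IsClosed (LinearMap.range (T : H →ₗ[ℂ] H) : Set H) ∧
      FiniteDimensional ℂ (H ⧸ LinearMap.range (T : H →ₗ[ℂ] H)) := by
  -- the compact operator 1 - B T
  have hu : IsCompactOperator ⇑(1 - B ∘L T : H →L[ℂ] H) := by
    have := h2.neg
    have heq : ⇑(1 - B ∘L T : H →L[ℂ] H) = -⇑(B ∘L T - 1) := by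
      funext x; simp
    rw [heq]; exact this
  -- (a) kernel is finite dimensional
  have hker : FiniteDimensional ℂ (LinearMap.ker (T : H →ₗ[ℂ] H)) := by
    refine finiteDimensional_of_isCompactOperator_fix _ (ContinuousLinearMap.isClosed_ker T)
      _ hu ?_
    intro x hx
    have hTx : T x = 0 := hx
    simp [hTx]
  -- (b) closed range
  set p := LinearMap.ker (T : H →ₗ[ℂ] H) with hp
  set M := pᗮ with hM
  have hMclosed : IsClosed ((M : Submodule ℂ H) : Set H) := p.isClosed_orthogonal
  have hbound : ∃ c : ℝ, ∀ x ∈ M, ‖x‖ ≤ c * ‖T x‖ := by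
    by_contra hcon
    push_neg at hcon
    have hyn : ∀ n : ℕ, ∃ y, y ∈ M ∧ ‖y‖ = 1 ∧ ‖T y‖ < 1 / (n + 1) := by
      intro n
      obtain ⟨x, hxM, hx⟩ := hcon ((n : ℝ) + 1)
      have hxpos : 0 < ‖x‖ := lt_of_le_of_lt (by positivity) hx
      refine ⟨‖x‖⁻¹ • x, M.smul_mem _ hxM, ?_, ?_⟩
      · rw [norm_smul, norm_inv, norm_norm, inv_mul_cancel₀ hxpos.ne']
      · rw [ContinuousLinearMap.map_smul_of_tower, norm_smul, norm_inv, norm_norm,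
          inv_mul_lt_iff₀ hxpos, mul_one_div,
          lt_div_iff₀ (by positivity : (0:ℝ) < (n : ℝ) + 1)]
        calc ‖T x‖ * ((n : ℝ) + 1) = ((n : ℝ) + 1) * ‖T x‖ := by ring
          _ < ‖x‖ := hx
    choose y hyM hy1 hyT using hyn
    have hTy0 : Tendsto (fun n => T (y n)) atTop (𝓝 0) := by
      rw [tendsto_zero_iff_norm_tendsto_zero]
      exact squeeze_zero (fun n => norm_nonneg _) (fun n => (hyT n).le)
        tendsto_one_div_add_atTop_nhds_zero_nat
    have hC : IsCompact (closure (⇑(1 - B ∘L T : H →L[ℂ] H) '' Metric.closedBall 0 1)) := by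
      have := hu.isCompact_closure_image_closedBall (𝕜₁ := ℂ)
        (f := ((1 - B ∘L T : H →L[ℂ] H) : H →ₗ[ℂ] H)) 1
      simpa using this
    have hmem : ∀ n, (1 - B ∘L T : H →L[ℂ] H) (y n) ∈
        closure (⇑(1 - B ∘L T : H →L[ℂ] H) '' Metric.closedBall 0 1) := by
      intro n
      exact subset_closure ⟨y n, by
        rw [Metric.mem_closedBall, dist_zero_right, hy1], rfl⟩
    obtain ⟨w, _, φ, hφ, hqw⟩ := hC.isSeqCompact hmem
    have hyconv : Tendsto (fun n => y (φ n)) atTop (𝓝 w) := by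
      have heq : ∀ n, y (φ n) = B (T (y (φ n))) + (1 - B ∘L T : H →L[ℂ] H) (y (φ n)) := by
        intro n; simp
      have hB0 : Tendsto (fun n => B (T (y (φ n)))) atTop (𝓝 0) := by
        have := (B.continuous.tendsto 0).comp (hTy0.comp hφ.tendsto_atTop)
        simpa [Function.comp_def] using this
      have := hB0.add hqw
      rw [zero_add] at this
      exact this.congr (fun n => (heq n).symm)
    have hw1 : ‖w‖ = 1 := by
      have h1' : Tendsto (fun n => ‖y (φ n)‖) atTop (𝓝 ‖w‖) := hyconv.norm
      have h2' : Tendsto (fun n => ‖y (φ n)‖) atTop (𝓝 1) := by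
        simp only [hy1]; exact tendsto_const_nhds
      exact tendsto_nhds_unique h1' h2'
    have hwM : w ∈ M := hMclosed.mem_of_tendsto hyconv (Eventually.of_forall fun n => hyM _)
    have hwp : w ∈ p := by
      have hTw : Tendsto (fun n => T (y (φ n))) atTop (𝓝 (T w)) :=
        (T.continuous.tendsto w).comp hyconv
      have hT0 : Tendsto (fun n => T (y (φ n))) atTop (𝓝 0) := hTy0.comp hφ.tendsto_atTop
      exact LinearMap.mem_ker.mpr (tendsto_nhds_unique hTw hT0)
    have : w = 0 := by
      have : w ∈ p ⊓ pᗮ := ⟨hwp, hwM⟩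
      rwa [Submodule.inf_orthogonal_eq_bot, Submodule.mem_bot] at this
    rw [this, norm_zero] at hw1
    exact one_ne_zero hw1.symm
  obtain ⟨c, hc⟩ := hbound
  haveI : CompleteSpace p := (ContinuousLinearMap.isClosed_ker T).completeSpace_coe
  have himg : (LinearMap.range (T : H →ₗ[ℂ] H) : Set H) = ⇑T '' ((M : Submodule ℂ H) : Set H) := by
    ext z
    constructor
    · rintro ⟨x, rfl⟩
      refine ⟨(Submodule.orthogonalProjection M x : H), (Submodule.orthogonalProjection M x).2, ?_⟩
      have hdec : ((Submodule.orthogonalProjection p x : p) : H) + ((Submodule.orthogonalProjection M x : M) : H) = x :=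
        p.starProjection_add_starProjection_orthogonal x
      have hker0 : T ((Submodule.orthogonalProjection p x : H)) = 0 := (Submodule.orthogonalProjection p x).2
      calc T ((Submodule.orthogonalProjection M x : H))
          = T ((Submodule.orthogonalProjection p x : H)) + T ((Submodule.orthogonalProjection M x : H)) := by
            rw [hker0, zero_add]
        _ = T ((Submodule.orthogonalProjection p x : H) + (Submodule.orthogonalProjection M x : H)) := by
            rw [map_add]
        _ = T x := by rw [hdec]
    · rintro ⟨v, hv, rfl⟩
      exact ⟨v, rfl⟩
  have hclosed : IsClosed (LinearMap.range (T : H →ₗ[ℂ] H) : Set H) := by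
    rw [himg]
    apply IsSeqClosed.isClosed
    intro zs z hzs hz
    choose v hvM hvT using hzs
    set c' := max c 1 with hc'def
    have hc'pos : (0 : ℝ) < c' := lt_of_lt_of_le one_pos (le_max_right _ _)
    have hc' : ∀ x ∈ M, ‖x‖ ≤ c' * ‖T x‖ := fun x hx =>
      le_trans (hc x hx) (mul_le_mul_of_nonneg_right (le_max_left _ _) (norm_nonneg _))
    have hvCauchy : CauchySeq v := by
      rw [Metric.cauchySeq_iff]
      intro ε hε
      have hzc : CauchySeq zs := hz.cauchySeq
      rw [Metric.cauchySeq_iff] at hzc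
      obtain ⟨N, hN⟩ := hzc (ε / c') (by positivity)
      refine ⟨N, fun m hm n hn => ?_⟩
      have hsub : v m - v n ∈ M := M.sub_mem (hvM m) (hvM n)
      have hb := hc' _ hsub
      rw [map_sub, hvT m, hvT n] at hb
      rw [dist_eq_norm]
      calc ‖v m - v n‖ ≤ c' * ‖zs m - zs n‖ := hb
        _ < c' * (ε / c') := by
            refine mul_lt_mul_of_pos_left ?_ hc'pos
            rw [← dist_eq_norm]; exact hN m hm n hn
        _ = ε := by field_simp
    obtain ⟨vl, hvl⟩ := cauchySeq_tendsto_of_complete hvCauchy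
    refine ⟨vl, hMclosed.mem_of_tendsto hvl (Eventually.of_forall hvM), ?_⟩
    have h1' : Tendsto (fun n => T (v n)) atTop (𝓝 (T vl)) := (T.continuous.tendsto vl).comp hvl
    have h2' : Tendsto (fun n => T (v n)) atTop (𝓝 z) := by
      refine hz.congr fun n => (hvT n).symm
    exact tendsto_nhds_unique h1' h2'
  refine ⟨hker, hclosed, ?_⟩
  -- (c) cokernel
  set r : Submodule ℂ H := LinearMap.range (T : H →ₗ[ℂ] H) with hr
  have hrset : (r : Set H) = (LinearMap.range (T : H →ₗ[ℂ] H) : Set H) := by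
    ext x; simp [hr, LinearMap.mem_range]
  have hrclosed : IsClosed (r : Set H) := hrset ▸ hclosed
  haveI : CompleteSpace r := hrclosed.completeSpace_coe
  have hT2 : IsCompactOperator ⇑(ContinuousLinearMap.adjoint (T ∘L B - 1)) :=
    isCompactOperator_adjoint _ h1
  have hT2neg : IsCompactOperator ⇑(-(ContinuousLinearMap.adjoint (T ∘L B - 1))) := by
    have := hT2.neg
    have heq : ⇑(-(ContinuousLinearMap.adjoint (T ∘L B - 1)))
        = -⇑(ContinuousLinearMap.adjoint (T ∘L B - 1)) := by funext x; simp
    rw [heq]; exact this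
  have hfix : ∀ z ∈ rᗮ, (-(ContinuousLinearMap.adjoint (T ∘L B - 1))) z = z := by
    intro z hz
    set a := ContinuousLinearMap.adjoint (T ∘L B) z with ha
    have hza : a = 0 := by
      have hinner : ⟪a, a⟫ = 0 := by
        rw [ha]
        rw [ContinuousLinearMap.adjoint_inner_left]
        have hmem : (T ∘L B) a ∈ r := ⟨B a, rfl⟩
        have h0 := (Submodule.mem_orthogonal r z).mp hz _ hmem
        rw [← inner_conj_symm, h0, map_zero]
      exact inner_self_eq_zero.mp hinner
    have hadj : ContinuousLinearMap.adjoint (T ∘L B - 1) z = -z := by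
      have : ContinuousLinearMap.adjoint (T ∘L B - 1)
          = ContinuousLinearMap.adjoint (T ∘L B) - ContinuousLinearMap.adjoint 1 := by
        exact map_sub (ContinuousLinearMap.adjoint : (H →L[ℂ] H) ≃ₗᵢ⋆[ℂ] (H →L[ℂ] H)) _ _
      rw [this]
      have hone : ContinuousLinearMap.adjoint (1 : H →L[ℂ] H) = 1 := by
        rw [ContinuousLinearMap.one_def, ContinuousLinearMap.adjoint_id]
      rw [ContinuousLinearMap.sub_apply, hone, ← ha, hza]
      simp
    rw [ContinuousLinearMap.neg_apply, hadj, neg_neg]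
  have hfd : FiniteDimensional ℂ ↥rᗮ :=
    finiteDimensional_of_isCompactOperator_fix _ r.isClosed_orthogonal _ hT2neg hfix
  have hcompl : IsCompl r rᗮ := Submodule.isCompl_orthogonal_of_hasOrthogonalProjection
  have e := Submodule.quotientEquivOfIsCompl r rᗮ hcompl
  exact Module.Finite.equiv e.symm

/-- Forward Atkinson: a Fredholm operator has a parametrix with finite-rank
(hence compact) defects. -/
lemma exists_parametrix (T : H →L[ℂ] H)
    (hker : FiniteDimensional ℂ (LinearMap.ker (T : H →ₗ[ℂ] H)))
    (hcl : IsClosed (LinearMap.range (T : H →ₗ[ℂ] H) : Set H))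
    (hcoker : FiniteDimensional ℂ (H ⧸ LinearMap.range (T : H →ₗ[ℂ] H))) :
    ∃ P : H →L[ℂ] H, IsCompactOperator ⇑(T ∘L P - 1) ∧ IsCompactOperator ⇑(P ∘L T - 1) := by
  classical
  set p : Submodule ℂ H := LinearMap.ker (T : H →ₗ[ℂ] H) with hp
  set M : Submodule ℂ H := pᗮ with hM
  set r : Submodule ℂ H := LinearMap.range (T : H →ₗ[ℂ] H) with hr
  have hrset : (r : Set H) = (LinearMap.range (T : H →ₗ[ℂ] H) : Set H) := by
    ext x; simp [hr, LinearMap.mem_range]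
  have hrclosed : IsClosed (r : Set H) := hrset ▸ hcl
  haveI : CompleteSpace r := hrclosed.completeSpace_coe
  haveI : CompleteSpace p := (ContinuousLinearMap.isClosed_ker T).completeSpace_coe
  haveI : CompleteSpace M := p.isClosed_orthogonal.completeSpace_coe
  -- rᗮ is finite dimensional
  have hcompl : IsCompl r rᗮ := Submodule.isCompl_orthogonal_of_hasOrthogonalProjection
  haveI hfdro : FiniteDimensional ℂ ↥rᗮ :=
    Module.Finite.equiv (Submodule.quotientEquivOfIsCompl r rᗮ hcompl)
  -- the restricted operator M → r
  have hmemr : ∀ x : M, T (x : H) ∈ r := fun x => ⟨(x : H), rfl⟩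
  set T' : M →L[ℂ] r := (T.comp M.subtypeL).codRestrict r hmemr with hT'
  have hT'app : ∀ x : M, ((T' x : r) : H) = T (x : H) := fun x => rfl
  have hinj : LinearMap.ker (T' : M →ₗ[ℂ] r) = ⊥ := by
    rw [LinearMap.ker_eq_bot']
    intro m hm
    have : T (m : H) = 0 := by
      rw [← hT'app m]; exact congrArg Subtype.val hm
    have hmp : (m : H) ∈ p ⊓ pᗮ := ⟨this, m.2⟩
    rw [Submodule.inf_orthogonal_eq_bot, Submodule.mem_bot] at hmp
    exact Subtype.ext hmp
  have hsurj : LinearMap.range (T' : M →ₗ[ℂ] r) = ⊤ := by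
    rw [LinearMap.range_eq_top]
    rintro ⟨z, hz⟩
    obtain ⟨x, rfl⟩ := hz
    refine ⟨Submodule.orthogonalProjection M x, ?_⟩
    apply Subtype.ext
    show T ((Submodule.orthogonalProjection M x : M) : H) = T x
    have hdec : ((Submodule.orthogonalProjection p x : p) : H) + ((Submodule.orthogonalProjection M x : M) : H) = x :=
        p.starProjection_add_starProjection_orthogonal x
    have hker0 : T ((Submodule.orthogonalProjection p x : H)) = 0 := (Submodule.orthogonalProjection p x).2
    calc T ((Submodule.orthogonalProjection M x : H))
        = T ((Submodule.orthogonalProjection p x : H)) + T ((Submodule.orthogonalProjection M x : H)) := by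
          rw [hker0, zero_add]
      _ = T ((Submodule.orthogonalProjection p x : H) + (Submodule.orthogonalProjection M x : H)) := by
          rw [map_add]
      _ = T x := by rw [hdec]
  set E := ContinuousLinearEquiv.ofBijective T' hinj hsurj with hE
  have hEapp : ∀ m : M, E m = T' m := fun m => rfl
  set P : H →L[ℂ] H :=
    M.subtypeL ∘L (E.symm : r →L[ℂ] M) ∘L Submodule.orthogonalProjection r with hP
  have hPapp : ∀ z : H, P z = ((E.symm (Submodule.orthogonalProjection r z) : M) : H) := fun z => rfl
  refine ⟨P, ?_, ?_⟩
  · -- T P - 1 = -(inclusion ∘ orthogonal projection onto rᗮ)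
    have heq : ∀ z, (T ∘L P - 1) z = -((rᗮ.subtypeL ∘L Submodule.orthogonalProjection rᗮ) z) := by
      intro z
      have h1' : T (P z) = ((Submodule.orthogonalProjection r z : r) : H) := by
        rw [hPapp]
        rw [← hT'app, ← hEapp, E.apply_symm_apply]
      have hdec : ((Submodule.orthogonalProjection r z : r) : H) + ((Submodule.orthogonalProjection rᗮ z : rᗮ) : H) = z :=
          r.starProjection_add_starProjection_orthogonal z
      simp only [ContinuousLinearMap.sub_apply, ContinuousLinearMap.comp_apply,
        ContinuousLinearMap.one_apply, Submodule.subtypeL_apply]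
      rw [h1']
      nth_rewrite 2 [← hdec]
      abel
    have : IsCompactOperator ⇑(rᗮ.subtypeL ∘L Submodule.orthogonalProjection rᗮ) := by
      refine isCompactOperator_of_mem_finiteDimensional _ rᗮ ?_
      intro x
      exact ((Submodule.orthogonalProjection rᗮ x) : rᗮ).2
    have hneg := this.neg
    have heq2 : ⇑(T ∘L P - 1) = -⇑(rᗮ.subtypeL ∘L Submodule.orthogonalProjection rᗮ) := by
      funext z; rw [heq z]; rfl
    rw [heq2]; exact hneg
  · -- P T - 1 = -(inclusion ∘ orthogonal projection onto p)
    have heq : ∀ x, (P ∘L T - 1) x = -((p.subtypeL ∘L Submodule.orthogonalProjection p) x) := by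
      intro x
      have hproj : Submodule.orthogonalProjection r (T x) = ⟨T x, ⟨x, rfl⟩⟩ := by
        have := Submodule.orthogonalProjectionOnto_mem_subspace_eq_self (K := r) ⟨T x, ⟨x, rfl⟩⟩
        simpa using this
      have hdec : ((Submodule.orthogonalProjection p x : p) : H) + ((Submodule.orthogonalProjection M x : M) : H) = x :=
        p.starProjection_add_starProjection_orthogonal x
      have hEM : E (Submodule.orthogonalProjection M x) = ⟨T x, ⟨x, rfl⟩⟩ := by
        rw [hEapp]
        apply Subtype.ext
        rw [hT'app]
        have hker0 : T ((Submodule.orthogonalProjection p x : H)) = 0 := (Submodule.orthogonalProjection p x).2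
        calc T ((Submodule.orthogonalProjection M x : H))
            = T ((Submodule.orthogonalProjection p x : H)) + T ((Submodule.orthogonalProjection M x : H)) := by
              rw [hker0, zero_add]
          _ = T ((Submodule.orthogonalProjection p x : H) + (Submodule.orthogonalProjection M x : H)) := by
              rw [map_add]
          _ = T x := by rw [hdec]
      have h1' : P (T x) = ((Submodule.orthogonalProjection M x : M) : H) := by
        rw [hPapp, hproj, ← hEM, E.symm_apply_apply]
      simp only [ContinuousLinearMap.sub_apply, ContinuousLinearMap.comp_apply,
        ContinuousLinearMap.one_apply, Submodule.subtypeL_apply]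
      rw [h1']
      nth_rewrite 2 [← hdec]
      abel
    have : IsCompactOperator ⇑(p.subtypeL ∘L Submodule.orthogonalProjection p) := by
      refine isCompactOperator_of_mem_finiteDimensional _ p ?_
      intro x
      exact ((Submodule.orthogonalProjection p x) : p).2
    have hneg := this.neg
    have heq2 : ⇑(P ∘L T - 1) = -⇑(p.subtypeL ∘L Submodule.orthogonalProjection p) := by
      funext z; rw [heq z]; rfl
    rw [heq2]; exact hneg

lemma isCompactOperator_finset_sum {ι : Type*} (s : Finset ι) (D : ι → H →L[ℂ] H)
    (h : ∀ i ∈ s, IsCompactOperator ⇑(D i)) : IsCompactOperator ⇑(∑ i ∈ s, D i) := by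
  classical
  induction s using Finset.cons_induction with
  | empty => simpa using (isCompactOperator_zero (M₁ := H) (M₂ := H))
  | cons a s ha ih =>
      rw [Finset.sum_cons]
      have h1 : IsCompactOperator ⇑(D a) := h a (Finset.mem_cons_self a s)
      have h2 : IsCompactOperator ⇑(∑ i ∈ s, D i) :=
        ih fun i hi => h i (Finset.mem_cons_of_mem hi)
      have : ⇑(D a + ∑ i ∈ s, D i) = ⇑(D a) + ⇑(∑ i ∈ s, D i) := by funext x; simp
      rw [this]
      exact h1.add h2

lemma isCompactOperator_smul_clm (c : ℝ) (D : H →L[ℂ] H) (h : IsCompactOperator ⇑D) :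
    IsCompactOperator ⇑(c • D) := by
  have : ⇑(c • D) = c • ⇑D := by funext x; simp
  rw [this]
  exact h.smul c

/-- The definition `IsFredholmOp` in terms of the components. -/
lemma memCzeroK_of_compact_support {Y : Type*} [TopologicalSpace Y]
    (D : Y → H →L[ℂ] H) (hcpt : ∀ y, IsCompactOperator ⇑(D y))
    (Z : Set Y) (hZ : IsCompact Z) (hzero : ∀ y ∉ Z, D y = 0) :
    (∀ y, IsCompactOperator ⇑(D y)) ∧ Tendsto (fun y => ‖D y‖) (cocompact Y) (𝓝 0) := by
  refine ⟨hcpt, ?_⟩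
  have hev : (fun y => ‖D y‖) =ᶠ[cocompact Y] fun _ => (0 : ℝ) := by
    rw [Filter.EventuallyEq, (Filter.hasBasis_cocompact).eventually_iff]
    exact ⟨Z, hZ, fun y hy => by rw [hzero y hy, norm_zero]⟩
  exact Tendsto.congr' hev.symm tendsto_const_nhds

set_option maxHeartbeats 2000000 in
set_option synthInstance.maxHeartbeats 400000 in
theorem fredholm_with_parameter_iff_invertible_mod_ideal'
    {Y : Type*} [TopologicalSpace Y] [LocallyCompactSpace Y] [T2Space Y]
    (A : Y → H →L[ℂ] H) (hAcont : Continuous A) (hAbdd : ∃ M, ∀ y, ‖A y‖ ≤ M) :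
    ((∀ y, (FiniteDimensional ℂ (LinearMap.ker ((A y) : H →ₗ[ℂ] H)) ∧
        IsClosed (LinearMap.range ((A y) : H →ₗ[ℂ] H) : Set H) ∧
        FiniteDimensional ℂ (H ⧸ LinearMap.range ((A y) : H →ₗ[ℂ] H)))) ∧
      ∃ S : Set Y, IsCompact S ∧ ∃ C : ℝ, ∀ y ∉ S, ∃ B : H →L[ℂ] H,
        (A y) ∘L B = 1 ∧ B ∘L (A y) = 1 ∧ ‖B‖ ≤ C) ↔
    (∃ B : Y → H →L[ℂ] H, Continuous B ∧ (∃ M, ∀ y, ‖B y‖ ≤ M) ∧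
      ((∀ y, IsCompactOperator ⇑((A y) ∘L (B y) - 1)) ∧
        Tendsto (fun y => ‖(A y) ∘L (B y) - 1‖) (cocompact Y) (𝓝 0)) ∧
      ((∀ y, IsCompactOperator ⇑((B y) ∘L (A y) - 1)) ∧
        Tendsto (fun y => ‖(B y) ∘L (A y) - 1‖) (cocompact Y) (𝓝 0))) := by
  constructor
  · rintro ⟨hFred, S, hScomp, C, hCinv⟩
    classical
    choose P hP1 hP2 using fun w : Y =>
      exists_parametrix (A w) (hFred w).1 (hFred w).2.1 (hFred w).2.2
    have hunit : ∀ y ∉ S, IsUnit (A y) := by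
      intro y hy
      obtain ⟨B', hB1, hB2, _⟩ := hCinv y hy
      exact ⟨⟨A y, B', hB1, hB2⟩, rfl⟩
    set N : Set Y := {y | ¬ IsUnit (A y)} with hN
    have hNmem : ∀ y, y ∉ N → IsUnit (A y) := fun y hy => not_not.mp hy
    have hNclosed : IsClosed N := by
      have ho : IsOpen {T : H →L[ℂ] H | IsUnit T} := Units.isOpen
      have h2 : IsOpen {y | IsUnit (A y)} := ho.preimage hAcont
      have : N = {y | IsUnit (A y)}ᶜ := by ext y; simp [hN]
      rw [this]
      exact h2.isClosed_compl
    have hNS : N ⊆ S := fun y hy => by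
      by_contra h
      exact hy (hunit y h)
    have hNcomp : IsCompact N := hScomp.of_isClosed_subset hNclosed hNS
    obtain ⟨K, hKcomp, hNint, -⟩ := exists_compact_between hNcomp isOpen_univ (Set.subset_univ N)
    set g : Y → H →L[ℂ] H := fun y => Ring.inverse (A y) with hg
    have hgA : ∀ y ∉ N, A y * g y = 1 ∧ g y * A y = 1 := by
      intro y hy
      exact ⟨Ring.mul_inverse_cancel _ (hNmem y hy), Ring.inverse_mul_cancel _ (hNmem y hy)⟩
    have hgcont : ∀ y ∉ N, ContinuousAt g y := by
      intro y hy
      obtain ⟨u, hu⟩ := hNmem y hy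
      have h1 : ContinuousAt Ring.inverse (A y) := by
        rw [← hu]
        exact NormedRing.inverse_continuousAt u
      exact h1.comp hAcont.continuousAt
    -- the covering neighborhoods
    set ε : Y → ℝ := fun w => (2 * (‖P w‖ + 1))⁻¹ with hε
    have hεpos : ∀ w, 0 < ε w := fun w => by positivity
    have hεP : ∀ w, ε w * ‖P w‖ ≤ 1/2 := by
      intro w
      rw [hε, inv_mul_le_iff₀ (by positivity)]
      nlinarith [norm_nonneg (P w)]
    set U : Y → Set Y := fun w => {y | ‖A y - A w‖ < ε w} with hUdef
    have hUopen : ∀ w, IsOpen (U w) :=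
      fun w => isOpen_lt ((hAcont.sub continuous_const).norm) continuous_const
    have hUmem : ∀ w, w ∈ U w := fun w => by
      simp only [hUdef, Set.mem_setOf_eq, sub_self, norm_zero]
      exact hεpos w
    obtain ⟨t, ht⟩ := hKcomp.elim_finite_subcover (fun w : K => U (w : Y))
      (fun w => hUopen _) (fun y hy => Set.mem_iUnion.mpr ⟨⟨y, hy⟩, hUmem y⟩)
    have hcover : K ⊆ ⋃ i : ↑t, U ((i : K) : Y) := by
      intro y hy
      obtain ⟨i, hit, hyi⟩ := Set.mem_iUnion₂.mp (ht hy)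
      exact Set.mem_iUnion.mpr ⟨⟨i, hit⟩, hyi⟩
    obtain ⟨f, hfsub, hfcs⟩ := PartitionOfUnity.exists_isSubordinate_of_locallyFinite_t2space
      hKcomp (fun i : ↑t => U ((i : K) : Y)) (fun i => hUopen _)
      (locallyFinite_of_finite _) hcover
    -- notation
    set w : ↑t → Y := fun i => ((i : K) : Y) with hwdef
    set Q : ↑t → H →L[ℂ] H := fun i => P (w i) with hQdef
    set σ : Y → ℝ := fun y => ∑ i : ↑t, f i y with hσdef
    have hσeq : ∀ y, σ y = ∑ᶠ i : ↑t, f i y := fun y => (finsum_eq_sum_of_fintype _).symm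
    have hσcont : Continuous σ := continuous_finset_sum _ fun i _ => (f i).continuous
    have hσ1 : ∀ y ∈ K, σ y = 1 := fun y hy => by rw [hσeq]; exact f.sum_eq_one hy
    have hσle : ∀ y, σ y ≤ 1 := fun y => by rw [hσeq]; exact f.sum_le_one y
    have hσnonneg : ∀ y, 0 ≤ σ y := fun y => Finset.sum_nonneg fun i _ => f.nonneg i y
    set φ₀ : Y → ℝ := fun y => 1 - σ y with hφ₀def
    have hφ₀cont : Continuous φ₀ := continuous_const.sub hσcont
    have hφ₀K : ∀ y ∈ K, φ₀ y = 0 := fun y hy => by simp [hφ₀def, hσ1 y hy]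
    have hφ₀nonneg : ∀ y, 0 ≤ φ₀ y := fun y => by simp [hφ₀def, hσle y]
    have hφ₀le : ∀ y, φ₀ y ≤ 1 := fun y => by simp [hφ₀def, hσnonneg y]
    have hφ₀supp : tsupport φ₀ ⊆ (interior K)ᶜ := by
      have h1 : Function.support φ₀ ⊆ Kᶜ := by
        intro y hy
        intro hyK
        exact hy (hφ₀K y hyK)
      calc tsupport φ₀ ⊆ closure Kᶜ := closure_mono h1
        _ = (interior K)ᶜ := closure_compl
    have hφ₀N : ∀ y ∈ tsupport φ₀, y ∉ N := fun y hy hyN => (hφ₀supp hy) (hNint hyN)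
    -- the zeroth term of the family
    have hterm0 : Continuous (fun y => φ₀ y • g y) := by
      rw [continuous_iff_continuousAt]
      intro y
      by_cases hy : y ∈ tsupport φ₀
      · exact (hφ₀cont.continuousAt).smul (hgcont y (hφ₀N y hy))
      · have hev : (fun z => φ₀ z • g z) =ᶠ[𝓝 y] fun _ => (0 : H →L[ℂ] H) := by
          have : (tsupport φ₀)ᶜ ∈ 𝓝 y := (isClosed_tsupport φ₀).isOpen_compl.mem_nhds hy
          refine Filter.eventually_of_mem this fun z hz => ?_
          have hz0 : φ₀ z = 0 := image_eq_zero_of_notMem_tsupport hz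
          show φ₀ z • g z = 0
          rw [hz0, zero_smul]
        exact (continuousAt_const (y := (0 : H →L[ℂ] H))).congr hev.symm
    -- bound for g on the support of φ₀
    have hgbound : ∃ C₂, 0 ≤ C₂ ∧ ∀ y ∈ tsupport φ₀, ‖g y‖ ≤ C₂ := by
      set W : Set Y := tsupport φ₀ ∩ S with hWdef
      have hWcomp : IsCompact W := hScomp.inter_left (isClosed_tsupport φ₀)
      have hgW : ContinuousOn g W := fun y hy =>
        (hgcont y (hφ₀N y hy.1)).continuousWithinAt
      obtain ⟨C₁, hC₁⟩ := hWcomp.exists_bound_of_continuousOn hgW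
      refine ⟨max C (max C₁ 0), le_trans (le_max_right C₁ 0) (le_max_right _ _), ?_⟩
      intro y hy
      by_cases hyS : y ∈ S
      · exact le_trans (hC₁ y ⟨hy, hyS⟩) (le_trans (le_max_left _ _) (le_max_right _ _))
      · obtain ⟨B', hB1, hB2, hB3⟩ := hCinv y hyS
        have : g y = B' := by
          have hu : IsUnit (A y) := ⟨⟨A y, B', hB1, hB2⟩, rfl⟩
          have := Ring.inverse_unit (⟨A y, B', hB1, hB2⟩ : (H →L[ℂ] H)ˣ)
          exact this
        rw [this]
        exact le_trans hB3 (le_max_left _ _)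
    obtain ⟨C₂, hC₂0, hC₂⟩ := hgbound
    -- the candidate family before correction
    set Bf : Y → H →L[ℂ] H := fun y => φ₀ y • g y + ∑ i : ↑t, f i y • Q i with hBfdef
    have hBfcont : Continuous Bf :=
      hterm0.add (continuous_finset_sum _ fun i _ => ((f i).continuous).smul continuous_const)
    have hφ₀g : ∀ y, ‖φ₀ y • g y‖ ≤ C₂ := by
      intro y
      by_cases hy : y ∈ tsupport φ₀
      · rw [norm_smul, Real.norm_of_nonneg (hφ₀nonneg y)]
        calc φ₀ y * ‖g y‖ ≤ 1 * ‖g y‖ :=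
              mul_le_mul_of_nonneg_right (hφ₀le y) (norm_nonneg _)
          _ = ‖g y‖ := one_mul _
          _ ≤ C₂ := hC₂ y hy
      · have : φ₀ y = 0 := image_eq_zero_of_notMem_tsupport hy
        rw [this, zero_smul, norm_zero]
        exact hC₂0
    have hBfbdd : ∀ y, ‖Bf y‖ ≤ C₂ + ∑ i : ↑t, ‖Q i‖ := by
      intro y
      calc ‖Bf y‖ ≤ ‖φ₀ y • g y‖ + ‖∑ i : ↑t, f i y • Q i‖ := norm_add_le _ _
        _ ≤ C₂ + ∑ i : ↑t, ‖Q i‖ := by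
            refine add_le_add (hφ₀g y) ?_
            refine le_trans (norm_sum_le _ _) ?_
            refine Finset.sum_le_sum fun i _ => ?_
            rw [norm_smul, Real.norm_of_nonneg (f.nonneg i y)]
            calc f i y * ‖Q i‖ ≤ 1 * ‖Q i‖ := by
                  refine mul_le_mul_of_nonneg_right ?_ (norm_nonneg _)
                  calc f i y ≤ σ y := Finset.single_le_sum (fun j _ => f.nonneg j y)
                        (Finset.mem_univ i)
                    _ ≤ 1 := hσle y
              _ = ‖Q i‖ := one_mul _
    -- support of the f i's
    set Z : Set Y := ⋃ i : ↑t, tsupport (f i) with hZdef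
    have hZcomp : IsCompact Z := isCompact_iUnion fun i => hfcs i
    have hfZ : ∀ y ∉ Z, ∀ i : ↑t, f i y = 0 := by
      intro y hy i
      refine image_eq_zero_of_notMem_tsupport fun hmem => hy ?_
      exact Set.mem_iUnion.mpr ⟨i, hmem⟩
    -- f i y ≠ 0 implies y close to w i
    have hfU : ∀ (i : ↑t) (y : Y), f i y ≠ 0 → ‖A y - A (w i)‖ < ε (w i) := by
      intro i y hy
      have : y ∈ tsupport (f i) := subset_tsupport _ hy
      exact hfsub i this
    -- right defects
    set kR : Y → H →L[ℂ] H := fun y => ∑ i : ↑t, f i y • (A (w i) * Q i - 1) with hkRdef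
    set rR : Y → H →L[ℂ] H := fun y => ∑ i : ↑t, f i y • ((A y - A (w i)) * Q i) with hrRdef
    set kL : Y → H →L[ℂ] H := fun y => ∑ i : ↑t, f i y • (Q i * A (w i) - 1) with hkLdef
    set rL : Y → H →L[ℂ] H := fun y => ∑ i : ↑t, f i y • (Q i * (A y - A (w i))) with hrLdef
    have hφ₀AgR : ∀ y, φ₀ y • (A y * g y - 1) = 0 := by
      intro y
      by_cases hy : φ₀ y = 0
      · rw [hy, zero_smul]
      · have hyN : y ∉ N := fun hyN =>
          (hφ₀supp (subset_tsupport _ hy)) (hNint hyN)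
        rw [(hgA y hyN).1, sub_self, smul_zero]
    have hφ₀AgL : ∀ y, φ₀ y • (g y * A y - 1) = 0 := by
      intro y
      by_cases hy : φ₀ y = 0
      · rw [hy, zero_smul]
      · have hyN : y ∉ N := fun hyN =>
          (hφ₀supp (subset_tsupport _ hy)) (hNint hyN)
        rw [(hgA y hyN).2, sub_self, smul_zero]
    have hsplit1 : ∀ y, A y * Bf y - 1 = φ₀ y • (A y * g y - 1)
        + (∑ i : ↑t, f i y • (A y * Q i - 1)) := by
      intro y
      have hone : (1 : H →L[ℂ] H) = φ₀ y • (1 : H →L[ℂ] H)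
          + ∑ i : ↑t, f i y • (1 : H →L[ℂ] H) := by
        rw [← Finset.sum_smul, ← add_smul]
        have : φ₀ y + ∑ i : ↑t, f i y = 1 := by
          rw [hφ₀def]; simp [hσdef]
        rw [this, one_smul]
      calc A y * Bf y - 1
          = φ₀ y • (A y * g y) + (∑ i : ↑t, f i y • (A y * Q i)) - 1 := by
            rw [hBfdef]
            simp only [mul_add, Finset.mul_sum, mul_smul_comm]
        _ = _ := by
            nth_rewrite 1 [hone]
            simp only [smul_sub, Finset.sum_sub_distrib]
            abel
    have hsplit2 : ∀ y, A y * Bf y - 1 = kR y + rR y := by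
      intro y
      rw [hsplit1 y, hφ₀AgR y, zero_add, hkRdef, hrRdef, ← Finset.sum_add_distrib]
      congr 1
      funext i
      rw [← smul_add]
      congr 1
      rw [sub_mul]
      abel
    have hsplit1L : ∀ y, Bf y * A y - 1 = φ₀ y • (g y * A y - 1)
        + (∑ i : ↑t, f i y • (Q i * A y - 1)) := by
      intro y
      have hone : (1 : H →L[ℂ] H) = φ₀ y • (1 : H →L[ℂ] H)
          + ∑ i : ↑t, f i y • (1 : H →L[ℂ] H) := by
        rw [← Finset.sum_smul, ← add_smul]
        have : φ₀ y + ∑ i : ↑t, f i y = 1 := by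
          rw [hφ₀def]; simp [hσdef]
        rw [this, one_smul]
      calc Bf y * A y - 1
          = φ₀ y • (g y * A y) + (∑ i : ↑t, f i y • (Q i * A y)) - 1 := by
            rw [hBfdef]
            simp only [add_mul, Finset.sum_mul, smul_mul_assoc]
        _ = _ := by
            nth_rewrite 1 [hone]
            simp only [smul_sub, Finset.sum_sub_distrib]
            abel
    have hsplit2L : ∀ y, Bf y * A y - 1 = kL y + rL y := by
      intro y
      rw [hsplit1L y, hφ₀AgL y, zero_add, hkLdef, hrLdef, ← Finset.sum_add_distrib]
      congr 1
      funext i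
      rw [← smul_add]
      congr 1
      rw [mul_sub]
      abel
    -- norm bounds on the small parts
    have hrRbound : ∀ y, ‖rR y‖ ≤ 1/2 := by
      intro y
      calc ‖rR y‖ ≤ ∑ i : ↑t, ‖f i y • ((A y - A (w i)) * Q i)‖ := norm_sum_le _ _
        _ ≤ ∑ i : ↑t, f i y * (1/2) := by
            refine Finset.sum_le_sum fun i _ => ?_
            rw [norm_smul, Real.norm_of_nonneg (f.nonneg i y)]
            by_cases hfi : f i y = 0
            · rw [hfi, zero_mul, zero_mul]
            · refine mul_le_mul_of_nonneg_left ?_ (f.nonneg i y)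
              calc ‖(A y - A (w i)) * Q i‖ ≤ ‖A y - A (w i)‖ * ‖Q i‖ := norm_mul_le _ _
                _ ≤ ε (w i) * ‖Q i‖ := by
                    refine mul_le_mul_of_nonneg_right (hfU i y hfi).le (norm_nonneg _)
                _ ≤ 1/2 := hεP (w i)
        _ = σ y * (1/2) := by rw [hσdef, Finset.sum_mul]
        _ ≤ 1/2 := by nlinarith [hσle y, hσnonneg y]
    have hrLbound : ∀ y, ‖rL y‖ ≤ 1/2 := by
      intro y
      calc ‖rL y‖ ≤ ∑ i : ↑t, ‖f i y • (Q i * (A y - A (w i)))‖ := norm_sum_le _ _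
        _ ≤ ∑ i : ↑t, f i y * (1/2) := by
            refine Finset.sum_le_sum fun i _ => ?_
            rw [norm_smul, Real.norm_of_nonneg (f.nonneg i y)]
            by_cases hfi : f i y = 0
            · rw [hfi, zero_mul, zero_mul]
            · refine mul_le_mul_of_nonneg_left ?_ (f.nonneg i y)
              calc ‖Q i * (A y - A (w i))‖ ≤ ‖Q i‖ * ‖A y - A (w i)‖ := norm_mul_le _ _
                _ ≤ ‖Q i‖ * ε (w i) := by
                    refine mul_le_mul_of_nonneg_left (hfU i y hfi).le (norm_nonneg _)
                _ = ε (w i) * ‖Q i‖ := mul_comm _ _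
                _ ≤ 1/2 := hεP (w i)
        _ = σ y * (1/2) := by rw [hσdef, Finset.sum_mul]
        _ ≤ 1/2 := by nlinarith [hσle y, hσnonneg y]
    -- compactness of k's values
    have hkRcpt : ∀ y, IsCompactOperator ⇑(kR y) := by
      intro y
      refine isCompactOperator_finset_sum _ _ fun i _ => ?_
      exact isCompactOperator_smul_clm _ _ (hP1 (w i))
    have hkLcpt : ∀ y, IsCompactOperator ⇑(kL y) := by
      intro y
      refine isCompactOperator_finset_sum _ _ fun i _ => ?_
      exact isCompactOperator_smul_clm _ _ (hP2 (w i))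
    -- continuity of the pieces
    have hrRcont : Continuous rR :=
      continuous_finset_sum _ fun i _ =>
        ((f i).continuous).smul ((hAcont.sub continuous_const).mul continuous_const)
    have hrLcont : Continuous rL :=
      continuous_finset_sum _ fun i _ =>
        ((f i).continuous).smul (continuous_const.mul (hAcont.sub continuous_const))
    have hkRcont : Continuous kR :=
      continuous_finset_sum _ fun i _ => ((f i).continuous).smul continuous_const
    have hkLcont : Continuous kL :=
      continuous_finset_sum _ fun i _ => ((f i).continuous).smul continuous_const
    -- vanishing outside Z
    have hkRzero : ∀ y ∉ Z, kR y = 0 := by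
      intro y hy
      show (∑ i : ↑t, f i y • (A (w i) * Q i - 1)) = 0
      refine Finset.sum_eq_zero fun i _ => ?_
      rw [hfZ y hy i, zero_smul]
    have hkLzero : ∀ y ∉ Z, kL y = 0 := by
      intro y hy
      show (∑ i : ↑t, f i y • (Q i * A (w i) - 1)) = 0
      refine Finset.sum_eq_zero fun i _ => ?_
      rw [hfZ y hy i, zero_smul]
    -- Neumann corrections
    set ER : Y → H →L[ℂ] H := fun y => Ring.inverse (1 + rR y) with hERdef
    set EL : Y → H →L[ℂ] H := fun y => Ring.inverse (1 + rL y) with hELdef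
    have hERunit : ∀ y, IsUnit (1 + rR y) := fun y => (neumann_aux _ (hrRbound y)).1
    have hELunit : ∀ y, IsUnit (1 + rL y) := fun y => (neumann_aux _ (hrLbound y)).1
    have hERnorm : ∀ y, ‖ER y‖ ≤ 2 := fun y => (neumann_aux _ (hrRbound y)).2
    have hELnorm : ∀ y, ‖EL y‖ ≤ 2 := fun y => (neumann_aux _ (hrLbound y)).2
    have hERcont : Continuous ER := by
      rw [continuous_iff_continuousAt]
      intro y
      obtain ⟨u, hu⟩ := hERunit y
      have h1 : ContinuousAt Ring.inverse (1 + rR y) := by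
        rw [← hu]
        exact NormedRing.inverse_continuousAt u
      have h2 : ContinuousAt (fun x => 1 + rR x) y := (continuous_const.add hrRcont).continuousAt
      exact ContinuousAt.comp (f := fun x => 1 + rR x) (x := y) h1 h2
    have hELcont : Continuous EL := by
      rw [continuous_iff_continuousAt]
      intro y
      obtain ⟨u, hu⟩ := hELunit y
      have h1 : ContinuousAt Ring.inverse (1 + rL y) := by
        rw [← hu]
        exact NormedRing.inverse_continuousAt u
      have h2 : ContinuousAt (fun x => 1 + rL x) y := (continuous_const.add hrLcont).continuousAt
      exact ContinuousAt.comp (f := fun x => 1 + rL x) (x := y) h1 h2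
    -- the corrected families
    set B2 : Y → H →L[ℂ] H := fun y => Bf y * ER y with hB2def
    set B3 : Y → H →L[ℂ] H := fun y => EL y * Bf y with hB3def
    have hB2cont : Continuous B2 := hBfcont.mul hERcont
    have hB2bdd : ∀ y, ‖B2 y‖ ≤ (C₂ + ∑ i : ↑t, ‖Q i‖) * 2 := by
      intro y
      calc ‖B2 y‖ ≤ ‖Bf y‖ * ‖ER y‖ := norm_mul_le _ _
        _ ≤ (C₂ + ∑ i : ↑t, ‖Q i‖) * 2 := by
            refine mul_le_mul (hBfbdd y) (hERnorm y) (norm_nonneg _) ?_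
            exact le_trans (norm_nonneg (Bf y)) (hBfbdd y)
    -- defects of the corrected families
    set uR : Y → H →L[ℂ] H := fun y => kR y * ER y with huRdef
    set vL : Y → H →L[ℂ] H := fun y => EL y * kL y with hvLdef
    have hB2defect : ∀ y, A y * B2 y - 1 = uR y := by
      intro y
      have h1 : A y * Bf y = 1 + rR y + kR y := by
        have := hsplit2 y
        rw [sub_eq_iff_eq_add] at this
        rw [this]; abel
      show A y * (Bf y * Ring.inverse (1 + rR y)) - 1 = kR y * Ring.inverse (1 + rR y)
      rw [← mul_assoc, h1, add_mul, Ring.mul_inverse_cancel _ (hERunit y)]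
      abel
    have hB3defect : ∀ y, B3 y * A y - 1 = vL y := by
      intro y
      have h1 : Bf y * A y = 1 + rL y + kL y := by
        have := hsplit2L y
        rw [sub_eq_iff_eq_add] at this
        rw [this]; abel
      show (Ring.inverse (1 + rL y) * Bf y) * A y - 1 = Ring.inverse (1 + rL y) * kL y
      rw [mul_assoc, h1, mul_add, Ring.inverse_mul_cancel _ (hELunit y)]
      abel
    have huRcpt : ∀ y, IsCompactOperator ⇑(uR y) := by
      intro y
      have : ⇑(uR y) = ⇑(kR y) ∘ ⇑(ER y) := rfl
      rw [this]
      exact (hkRcpt y).comp_clm (ER y)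
    have hvLcpt : ∀ y, IsCompactOperator ⇑(vL y) := by
      intro y
      have : ⇑(vL y) = ⇑(EL y) ∘ ⇑(kL y) := rfl
      rw [this]
      exact (hkLcpt y).clm_comp (EL y)
    have huRzero : ∀ y ∉ Z, uR y = 0 := fun y hy => by
      show kR y * ER y = 0
      rw [hkRzero y hy, zero_mul]
    have hvLzero : ∀ y ∉ Z, vL y = 0 := fun y hy => by
      show EL y * kL y = 0
      rw [hkLzero y hy, mul_zero]
    -- difference of the two corrected families lies in the ideal
    set d : Y → H →L[ℂ] H := fun y => vL y * B2 y - B3 y * uR y with hddef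
    have hdiff : ∀ y, B3 y - B2 y = d y := by
      intro y
      show B3 y - B2 y = vL y * B2 y - B3 y * uR y
      rw [← hB2defect y, ← hB3defect y]
      noncomm_ring
    -- left defect of B2
    have hB2left : ∀ y, B2 y * A y - 1 = -(d y * A y) + vL y := by
      intro y
      have h1 : B2 y = B3 y - d y := by
        rw [← hdiff y]; abel
      rw [h1, sub_mul]
      rw [← hB3defect y]
      abel
    -- assemble
    refine ⟨B2, hB2cont, ⟨(C₂ + ∑ i : ↑t, ‖Q i‖) * 2, hB2bdd⟩, ?_, ?_⟩
    · have := memCzeroK_of_compact_support (fun y => A y * B2 y - 1)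
        (fun y => by
          show IsCompactOperator ⇑(A y * B2 y - 1)
          rw [hB2defect y]; exact huRcpt y) Z hZcomp
        (fun y hy => by
          show A y * B2 y - 1 = 0
          rw [hB2defect y]; exact huRzero y hy)
      exact this
    · have := memCzeroK_of_compact_support (fun y => B2 y * A y - 1)
        (fun y => ?_) Z hZcomp (fun y hy => ?_)
      · exact this
      · -- compactness of the left defect
        show IsCompactOperator ⇑(B2 y * A y - 1)
        rw [hB2left y]
        have hc1 : IsCompactOperator ⇑(d y * A y) := by
          have hd : IsCompactOperator ⇑(d y) := by
            show IsCompactOperator ⇑(vL y * B2 y - B3 y * uR y)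
            have h1 : IsCompactOperator ⇑(vL y * B2 y) := by
              have : ⇑(vL y * B2 y) = ⇑(vL y) ∘ ⇑(B2 y) := rfl
              rw [this]
              exact (hvLcpt y).comp_clm (B2 y)
            have h2 : IsCompactOperator ⇑(B3 y * uR y) := by
              have : ⇑(B3 y * uR y) = ⇑(B3 y) ∘ ⇑(uR y) := rfl
              rw [this]
              exact (huRcpt y).clm_comp (B3 y)
            have : ⇑(vL y * B2 y - B3 y * uR y) = ⇑(vL y * B2 y) - ⇑(B3 y * uR y) := by
              funext x; simp
            rw [this]
            exact h1.sub h2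
          have : ⇑(d y * A y) = ⇑(d y) ∘ ⇑(A y) := rfl
          rw [this]
          exact hd.comp_clm (A y)
        have : ⇑(-(d y * A y) + vL y) = -⇑(d y * A y) + ⇑(vL y) := by
          funext x; simp
        rw [this]
        exact (hc1.neg).add (hvLcpt y)
      · -- vanishing outside Z
        show B2 y * A y - 1 = 0
        rw [hB2left y]
        have hd0 : d y = vL y * B2 y - B3 y * 0 := by
          show vL y * B2 y - B3 y * uR y = vL y * B2 y - B3 y * 0
          rw [huRzero y hy]
        rw [hd0, hvLzero y hy]
        simp

  · rintro ⟨B, hBcont, ⟨MB, hMB⟩, ⟨huc, hut⟩, ⟨hvc, hvt⟩⟩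
    refine ⟨fun y => isFredholmOp_of_inverse_mod_compact (A y) (B y) (huc y) (hvc y), ?_⟩
    -- find the compact set outside which the defects are < 1/2
    have h1 : ∀ᶠ y in cocompact Y, ‖(A y) ∘L (B y) - 1‖ < 1/2 :=
      hut (Iio_mem_nhds (by norm_num : (0:ℝ) < 1/2))
    have h2 : ∀ᶠ y in cocompact Y, ‖(B y) ∘L (A y) - 1‖ < 1/2 :=
      hvt (Iio_mem_nhds (by norm_num : (0:ℝ) < 1/2))
    obtain ⟨K, hKcomp, hKsub⟩ := (Filter.hasBasis_cocompact).eventually_iff.mp (h1.and h2)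
    refine ⟨K, hKcomp, 2 * MB, ?_⟩
    intro y hy
    obtain ⟨hy1, hy2⟩ := hKsub hy
    set a := A y with ha
    set b := B y with hb
    have hab : a ∘L b = a * b := rfl
    have hba : b ∘L a = b * a := rfl
    have ht1 : ‖a * b - 1‖ ≤ 1/2 := by rw [← hab]; exact hy1.le
    have ht2 : ‖b * a - 1‖ ≤ 1/2 := by rw [← hba]; exact hy2.le
    have hu1 : IsUnit (a * b) := by
      have := (neumann_aux (a * b - 1) ht1).1
      simpa using this
    have hu2 : IsUnit (b * a) := by
      have := (neumann_aux (b * a - 1) ht2).1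
      simpa using this
    -- a is invertible with inverse c
    set c := b * Ring.inverse (a * b) with hcdef
    have hac : a * c = 1 := by
      rw [hcdef, ← mul_assoc]
      exact Ring.mul_inverse_cancel _ hu1
    set d := Ring.inverse (b * a) * b with hddef
    have hda : d * a = 1 := by
      rw [hddef, mul_assoc]
      exact Ring.inverse_mul_cancel _ hu2
    have hcd : c = d := by
      calc c = 1 * c := (one_mul c).symm
        _ = d * a * c := by rw [hda]
        _ = d * (a * c) := mul_assoc _ _ _
        _ = d := by rw [hac, mul_one]
    refine ⟨c, hac, by rw [hcd]; exact hda, ?_⟩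
    -- norm bound
    have hinv : Ring.inverse (a * b) = Ring.inverse (1 + (a * b - 1)) := by
      congr 1; abel
    calc ‖c‖ ≤ ‖b‖ * ‖Ring.inverse (a * b)‖ := norm_mul_le _ _
      _ ≤ MB * 2 := by
          refine mul_le_mul (hMB y) ?_ (norm_nonneg _) (le_trans (norm_nonneg _) (hMB y))
          rw [hinv]
          exact (neumann_aux _ ht1).2
      _ = 2 * MB := by ring

end AuxiliaryFredholm

/-- A bounded continuous operator family `A : Y → B(H)` is Fredholm for
every `y`, invertible outside a compact subset of `Y` with uniformly bounded inverse,
if and only if its image in the quotient `C_b(Y, B(H)) / C₀(Y, K(H))` is invertible,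
i.e. there is a bounded continuous family `B` inverting `A` modulo `C₀(Y, K(H))`. -/
theorem fredholm_with_parameter_iff_invertible_mod_ideal
    {H : Type*} [NormedAddCommGroup H] [InnerProductSpace ℂ H] [CompleteSpace H]
    {Y : Type*} [TopologicalSpace Y] [LocallyCompactSpace Y] [T2Space Y]
    (A : Y → H →L[ℂ] H) (hAcont : Continuous A) (hAbdd : ∃ M, ∀ y, ‖A y‖ ≤ M) :
    ((∀ y, IsFredholmOp (A y)) ∧
      ∃ S : Set Y, IsCompact S ∧ ∃ C : ℝ, ∀ y ∉ S, ∃ B : H →L[ℂ] H,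
        (A y) ∘L B = 1 ∧ B ∘L (A y) = 1 ∧ ‖B‖ ≤ C) ↔
    (∃ B : Y → H →L[ℂ] H, Continuous B ∧ (∃ M, ∀ y, ‖B y‖ ≤ M) ∧
      MemCzeroK (fun y => (A y) ∘L (B y) - 1) ∧
      MemCzeroK (fun y => (B y) ∘L (A y) - 1)) := by
  exact fredholm_with_parameter_iff_invertible_mod_ideal' A hAcont hAbdd
end

section
/- Let X be a compact Hausdorff space acting faithfully on a Hilbert space H via a unital *-representation of C(X) in B(H), with C(X) ∩ K(H) = {0}, and assume for each x ∈ X the net of functions φ ∈ C(X) with 0 ≤ φ ≤ 1 and φ = 1 near x (ordered by φ ≺ ψ iff φψ = ψ) converges strongly to 0 in B(H). Let A be the C*-algebra of bounded operators that commute with every φ ∈ C(X) modulo compacts, and J_x the closed ideal in A generated by functions vanishing at x. Then an operator A ∈ A is compact if and only if its image in A/J_x is zero for every x ∈ X. -/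
open Filter Topology

section Localization

variable {X : Type*} [TopologicalSpace X] [CompactSpace X] [T2Space X]
variable {H : Type*} [NormedAddCommGroup H] [InnerProductSpace ℂ H] [CompleteSpace H]

/-- The complexification of a real-valued continuous function. -/
def toCC {X : Type*} [TopologicalSpace X] (φ : C(X, ℝ)) : C(X, ℂ) :=
  ⟨fun x => (φ x : ℂ), Complex.continuous_ofReal.comp φ.continuous⟩

/-- The localizing class `F_x` at a point `x`: continuous functions with values in `[0,1]`
equal to `1` in a neighborhood of `x`. -/
def locClass (x : X) : Set C(X, ℝ) :=
  {φ | (∀ y, φ y ∈ Set.Icc (0:ℝ) 1) ∧ ∃ U ∈ 𝓝 x, ∀ y ∈ U, φ y = 1}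

variable (π : C(X, ℂ) →⋆ₐ[ℂ] (H →L[ℂ] H))

/-- The C*-algebra `𝒜` of local operators: bounded operators commuting with the
action of every `φ ∈ C(X)` modulo compact operators. -/
def localOps : Set (H →L[ℂ] H) :=
  {T | ∀ φ : C(X, ℂ), IsCompactOperator ⇑(T ∘L π φ - π φ ∘L T)}

/-- The closed two-sided ideal `J_x` of `𝒜` generated by the functions vanishing at `x`. -/
def Jloc (x : X) : Set (H →L[ℂ] H) :=
  closure {T | ∃ (n : ℕ) (A B : Fin n → H →L[ℂ] H) (φ : Fin n → C(X, ℂ)),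
    (∀ i, A i ∈ localOps π) ∧ (∀ i, B i ∈ localOps π) ∧ (∀ i, φ i x = 0) ∧
    T = ∑ i, (A i) ∘L (π (φ i)) ∘L (B i)}

/-- The representation of `C(X)` is faithful and meets the compact operators trivially. -/
def FaithfulNoCompact : Prop :=
  Function.Injective π ∧ ∀ φ : C(X, ℂ), IsCompactOperator ⇑(π φ) → φ = 0

/-- Each localizing class `F_x`, directed by `φ ≺ ψ ↔ φψ = ψ`, converges strongly to `0`. -/
def LocStrongConv : Prop :=
  ∀ (x : X) (v : H) (ε : ℝ), 0 < ε →
    ∃ φ ∈ locClass x, ∀ ψ ∈ locClass x, φ * ψ = ψ → ‖π (toCC ψ) v‖ < ε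

end Localization


set_option linter.unusedSectionVars false
set_option maxHeartbeats 1000000

open scoped InnerProductSpace

private lemma move_lemma' {R : Type*} [Ring R] (a b c d e : R) (h : a * (c - d) = 0) :
    a * (b * (c * e)) * a = a * (b * (d * e)) * a + (a * b - b * a) * ((c - d) * (e * a)) := by
  have h1 : (a * b - b * a) * ((c - d) * (e * a)) =
      (a * (b * ((c - d) * e))) * a - b * (a * (c - d)) * (e * a) := by noncomm_ring
  rw [h1, h, mul_zero, zero_mul, sub_zero]
  noncomm_ring

section Helpers

variable {X : Type*} [TopologicalSpace X] [CompactSpace X] [T2Space X]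
variable {H : Type*} [NormedAddCommGroup H] [InnerProductSpace ℂ H] [CompleteSpace H]

lemma toCC_apply' (φ : C(X,ℝ)) (y : X) : toCC φ y = (φ y : ℂ) := rfl

lemma star_toCC (φ : C(X,ℝ)) : star (toCC φ) = toCC φ := by
  ext y
  simp [toCC, Complex.conj_ofReal]

lemma norm_toCC_le {φ : C(X,ℝ)} {c : ℝ} (hc : 0 ≤ c) (h : ∀ y, |φ y| ≤ c) :
    ‖toCC φ‖ ≤ c := by
  rw [ContinuousMap.norm_le _ hc]
  intro y
  simpa [toCC] using h y

variable (π : C(X, ℂ) →⋆ₐ[ℂ] (H →L[ℂ] H))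

lemma pi_norm_le (f : C(X,ℂ)) : ‖π f‖ ≤ ‖f‖ := NonUnitalStarAlgHom.norm_apply_le π f

lemma pi_selfAdjoint (φ : C(X,ℝ)) (a b : H) :
    ⟪π (toCC φ) a, b⟫_ℂ = ⟪a, π (toCC φ) b⟫_ℂ := by
  have h : ContinuousLinearMap.adjoint (π (toCC φ)) = π (toCC φ) := by
    rw [← ContinuousLinearMap.star_eq_adjoint, ← map_star, star_toCC]
  conv_lhs => rw [← h]
  exact ContinuousLinearMap.adjoint_inner_left (π (toCC φ)) b a

lemma one_mem_localOps : (1 : H →L[ℂ] H) ∈ localOps π := by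
  intro φ
  have h : (1 : H →L[ℂ] H) ∘L π φ - π φ ∘L 1 = 0 := by ext v; simp
  rw [h]
  exact isCompactOperator_zero

lemma isCompactOperator_sum {ι : Type*} (s : Finset ι) (f : ι → H →L[ℂ] H)
    (h : ∀ i ∈ s, IsCompactOperator ⇑(f i)) : IsCompactOperator ⇑(∑ i ∈ s, f i) := by
  classical
  induction s using Finset.induction_on with
  | empty => simpa using (isCompactOperator_zero : IsCompactOperator (0 : H → H))
  | insert i s hi ih =>
    rw [Finset.sum_insert hi]
    rw [ContinuousLinearMap.coe_add']
    exact (h _ (Finset.mem_insert_self _ _)).add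
      (ih fun i his => h i (Finset.mem_insert_of_mem his))

lemma isCompact_mul_right {N : H →L[ℂ] H} (M : H →L[ℂ] H) (h : IsCompactOperator ⇑N) :
    IsCompactOperator ⇑(N * M) := h.comp_clm M

lemma one_mem_locClass (x : X) : (1 : C(X,ℝ)) ∈ locClass x :=
  ⟨fun _ => by simp, Set.univ, Filter.univ_mem, fun _ _ => rfl⟩

lemma mul_mem_locClass {x : X} {φ ψ : C(X,ℝ)} (hφ : φ ∈ locClass x) (hψ : ψ ∈ locClass x) :
    φ * ψ ∈ locClass x := by
  obtain ⟨h1, U, hU, hU1⟩ := hφ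
  obtain ⟨h2, V, hV, hV1⟩ := hψ
  refine ⟨fun y => ?_, U ∩ V, Filter.inter_mem hU hV, fun y hy => ?_⟩
  · constructor
    · exact mul_nonneg (h1 y).1 (h2 y).1
    · calc φ y * ψ y ≤ 1 * 1 := mul_le_mul (h1 y).2 (h2 y).2 (h2 y).1 zero_le_one
        _ = 1 := one_mul 1
  · simp only [ContinuousMap.mul_apply, hU1 y hy.1, hV1 y hy.2, one_mul]

lemma prod_mem_locClass {ι : Type*} {x : X} (s : Finset ι) (φ : ι → C(X,ℝ))
    (h : ∀ i ∈ s, φ i ∈ locClass x) : (∏ i ∈ s, φ i) ∈ locClass x := by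
  classical
  induction s using Finset.induction_on with
  | empty => simpa using one_mem_locClass x
  | insert i s hi ih =>
    rw [Finset.prod_insert hi]
    exact mul_mem_locClass (h _ (Finset.mem_insert_self _ _))
      (ih fun i his => h i (Finset.mem_insert_of_mem his))

lemma locClass_one_at {x : X} {φ : C(X,ℝ)} (hφ : φ ∈ locClass x) : φ x = 1 := by
  obtain ⟨_, U, hU, hU1⟩ := hφ
  exact hU1 x (mem_of_mem_nhds hU)

lemma exists_locClass_subordinate {x : X} {φ : C(X,ℝ)} (hφ : φ ∈ locClass x) :
    ∃ ψ ∈ locClass x, φ * ψ = ψ := by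
  obtain ⟨h01, U, hU, hU1⟩ := hφ
  have hmem : φ ⁻¹' {1} ∈ 𝓝 x := Filter.mem_of_superset hU fun y hy => hU1 y hy
  set V : Set X := interior (φ ⁻¹' {1}) with hV
  have hxV : x ∈ V := mem_interior_iff_mem_nhds.mpr hmem
  obtain ⟨K, hK, hKc, hKV⟩ := exists_mem_nhds_isClosed_subset (isOpen_interior.mem_nhds hxV)
  obtain ⟨ψ, hψ0, hψ1, hψ01⟩ := exists_continuous_zero_one_of_isClosed
    (isOpen_interior.isClosed_compl) hKc
    (Set.disjoint_left.mpr fun y hy hyK => hy (hKV hyK))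
  refine ⟨ψ, ⟨hψ01, K, hK, fun y hy => hψ1 hy⟩, ?_⟩
  ext y
  simp only [ContinuousMap.mul_apply]
  by_cases hy : ψ y = 0
  · rw [hy, mul_zero]
  · have hyV : y ∈ V := by
      by_contra hyV
      exact hy (hψ0 hyV)
    have h1 : φ y = 1 := by
      have := interior_subset hyV
      simpa using this
    rw [h1, one_mul]

lemma factor_absorb {ι : Type*} {x : X} (s : Finset ι) (φ : ι → C(X,ℝ))
    (h : ∀ i ∈ s, φ i ∈ locClass x) {ψ : C(X,ℝ)}
    (habs : (∏ i ∈ s, φ i) * ψ = ψ) {i : ι} (hi : i ∈ s) : φ i * ψ = ψ := by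
  ext y
  simp only [ContinuousMap.mul_apply]
  by_cases hy : ψ y = 0
  · rw [hy, mul_zero]
  · have hprod : (∏ j ∈ s, φ j) y * ψ y = ψ y := by
      have := congrArg (fun f : C(X,ℝ) => f y) habs
      simpa using this
    have hpy : (∏ j ∈ s, φ j) y = 1 :=
      mul_right_cancel₀ hy (by rw [hprod, one_mul])
    have hprody : ∏ j ∈ s, φ j y = 1 := by
      rw [← hpy]; exact (ContinuousMap.prod_apply _ _ _).symm
    have hfac : φ i y = 1 := by
      by_contra hne
      have hlt : φ i y < 1 := lt_of_le_of_ne ((h i hi).1 y).2 hne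
      have hlt2 : ∏ j ∈ s, φ j y < 1 := by
        classical
        rw [← Finset.prod_erase_mul _ _ hi]
        calc (∏ j ∈ s.erase i, φ j y) * φ i y ≤ 1 * φ i y := by
              refine mul_le_mul_of_nonneg_right ?_ ((h i hi).1 y).1
              exact Finset.prod_le_one (fun j hj => ((h j (Finset.mem_of_mem_erase hj)).1 y).1)
                (fun j hj => ((h j (Finset.mem_of_mem_erase hj)).1 y).2)
          _ = φ i y := one_mul _
          _ < 1 := hlt
      rw [hprody] at hlt2
      exact lt_irrefl 1 hlt2
    rw [hfac, one_mul]

lemma sandwich_norm_le {ι : Type*} [Fintype ι] (P E : ι → H →L[ℂ] H) {c : ℝ} (hc : 0 ≤ c)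
    (hsa : ∀ j (a b : H), ⟪P j a, b⟫_ℂ = ⟪a, P j b⟫_ℂ)
    (hsum : ∀ u : H, ∑ j, ‖P j u‖ ^ 2 = ‖u‖ ^ 2)
    (hE : ∀ j, ‖E j‖ ≤ c) :
    ‖∑ j, P j * (E j * P j)‖ ≤ c := by
  set Z : H →L[ℂ] H := ∑ j, P j * (E j * P j) with hZ
  refine ContinuousLinearMap.opNorm_le_bound _ hc fun v => ?_
  have key : ‖Z v‖ ^ 2 ≤ c * (‖v‖ * ‖Z v‖) := by
    have h1 : (‖Z v‖ : ℝ) ^ 2 = Complex.re ⟪Z v, Z v⟫_ℂ := by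
      exact (inner_self_eq_norm_sq (𝕜 := ℂ) (Z v)).symm
    have hZv : Z v = ∑ j, P j (E j (P j v)) := by
      rw [hZ, ContinuousLinearMap.sum_apply]
      simp [ContinuousLinearMap.mul_apply]
    have h2 : ⟪Z v, Z v⟫_ℂ = ∑ j, ⟪E j (P j v), P j (Z v)⟫_ℂ := by
      nth_rewrite 1 [hZv]
      rw [sum_inner]
      exact Finset.sum_congr rfl fun j _ => hsa j _ _
    have h3 : Complex.re ⟪Z v, Z v⟫_ℂ ≤ ∑ j, ‖E j (P j v)‖ * ‖P j (Z v)‖ := by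
      rw [h2, Complex.re_sum]
      refine Finset.sum_le_sum fun j _ => ?_
      calc Complex.re ⟪E j (P j v), P j (Z v)⟫_ℂ ≤ ‖⟪E j (P j v), P j (Z v)⟫_ℂ‖ :=
            Complex.re_le_norm _
        _ ≤ ‖E j (P j v)‖ * ‖P j (Z v)‖ := norm_inner_le_norm _ _
    have h4 : ∑ j, ‖E j (P j v)‖ * ‖P j (Z v)‖ ≤ c * (‖v‖ * ‖Z v‖) := by
      have h5 : ∀ j, ‖E j (P j v)‖ * ‖P j (Z v)‖ ≤ c * (‖P j v‖ * ‖P j (Z v)‖) := by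
        intro j
        rw [← mul_assoc]
        exact mul_le_mul_of_nonneg_right
          (le_trans (ContinuousLinearMap.le_opNorm _ _)
            (mul_le_mul_of_nonneg_right (hE j) (norm_nonneg _))) (norm_nonneg _)
      calc ∑ j, ‖E j (P j v)‖ * ‖P j (Z v)‖ ≤ ∑ j, c * (‖P j v‖ * ‖P j (Z v)‖) :=
            Finset.sum_le_sum fun j _ => h5 j
        _ = c * ∑ j, ‖P j v‖ * ‖P j (Z v)‖ := by rw [Finset.mul_sum]
        _ ≤ c * (‖v‖ * ‖Z v‖) := by
            refine mul_le_mul_of_nonneg_left ?_ hc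
            have hCS := Finset.sum_mul_sq_le_sq_mul_sq Finset.univ
              (fun j => ‖P j v‖) (fun j => ‖P j (Z v)‖)
            rw [hsum v, hsum (Z v)] at hCS
            have hnn : (0:ℝ) ≤ ∑ j, ‖P j v‖ * ‖P j (Z v)‖ :=
              Finset.sum_nonneg fun j _ => mul_nonneg (norm_nonneg _) (norm_nonneg _)
            nlinarith [norm_nonneg v, norm_nonneg (Z v),
              mul_nonneg (norm_nonneg v) (norm_nonneg (Z v))]
    calc ‖Z v‖ ^ 2 = Complex.re ⟪Z v, Z v⟫_ℂ := h1
      _ ≤ ∑ j, ‖E j (P j v)‖ * ‖P j (Z v)‖ := h3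
      _ ≤ c * (‖v‖ * ‖Z v‖) := h4
  rcases eq_or_lt_of_le (norm_nonneg (Z v)) with h0 | h0
  · rw [← h0]; positivity
  · nlinarith

lemma exists_partition {ι : Type*} [Fintype ι] (U : ι → Set X) (ho : ∀ i, IsOpen (U i))
    (hU : (⋃ i, U i) = Set.univ) : ∃ p : ι → C(X,ℝ),
    (∀ i y, 0 ≤ p i y) ∧ (∀ i, tsupport ⇑(p i) ⊆ U i) ∧ ∀ y, ∑ i, p i y = 1 := by
  obtain ⟨f, hf⟩ := PartitionOfUnity.exists_isSubordinate_of_locallyFinite isClosed_univ U ho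
    (locallyFinite_of_finite U) (by rw [hU])
  exact ⟨f, fun i y => f.nonneg i y, hf, fun y => by
    rw [← finsum_eq_sum_of_fintype]; exact f.sum_eq_one (Set.mem_univ y)⟩

lemma exists_sq_partition {ι : Type*} [Fintype ι] (U : ι → Set X) (ho : ∀ i, IsOpen (U i))
    (hU : (⋃ i, U i) = Set.univ) : ∃ σ : ι → C(X,ℝ),
    (∀ i y, 0 ≤ σ i y) ∧ (∀ i, tsupport ⇑(σ i) ⊆ U i) ∧ ∀ y, ∑ i, (σ i y)^2 = 1 := by
  obtain ⟨p, h0, hsupp, hsum⟩ := exists_partition U ho hU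
  refine ⟨fun i => ⟨fun y => Real.sqrt (p i y), Real.continuous_sqrt.comp (p i).continuous⟩,
    fun i y => Real.sqrt_nonneg _, fun i => ?_, fun y => ?_⟩
  · refine subset_trans (closure_mono ?_) (hsupp i)
    intro y hy
    simp only [Function.mem_support, ContinuousMap.coe_mk] at hy ⊢
    exact fun h => hy (by rw [h, Real.sqrt_zero])
  · calc ∑ i, (Real.sqrt (p i y))^2 = ∑ i, p i y :=
        Finset.sum_congr rfl fun i _ => Real.sq_sqrt (h0 i y)
      _ = 1 := hsum y

lemma exists_plateau {U : Set X} (hU : IsOpen U) {K : Set X} (hK : IsClosed K) (hKU : K ⊆ U) :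
    ∃ θ : C(X,ℝ), (∀ y, θ y ∈ Set.Icc (0:ℝ) 1) ∧ (∀ y ∈ K, θ y = 1) ∧
      ∀ y, y ∉ U → θ y = 0 := by
  obtain ⟨θ, h0, h1, h01⟩ := exists_continuous_zero_one_of_isClosed hU.isClosed_compl hK
    (Set.disjoint_left.mpr fun y hy hyK => hy (hKU hyK))
  exact ⟨θ, h01, fun y hy => h1 hy, fun y hy => h0 hy⟩

lemma forward_dir (hconv : LocStrongConv π) (T : H →L[ℂ] H) (hT : T ∈ localOps π)
    (hK : IsCompactOperator ⇑T) (x : X) : T ∈ Jloc π x := by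
  rw [Jloc]
  refine Metric.mem_closure_iff.mpr fun ε hε => ?_
  have hε8 : (0:ℝ) < ε / 8 := by linarith
  have hcc : IsCompact (closure (⇑T '' Metric.closedBall 0 1)) :=
    IsCompactOperator.isCompact_closure_image_closedBall (f := (T : H →ₗ[ℂ] H)) hK 1
  obtain ⟨t, htfin, htcover⟩ := (Metric.totallyBounded_iff.mp hcc.totallyBounded) (ε/8) hε8
  classical
  choose g hg1 hg2 using fun w : H => hconv x w (ε/8) hε8
  set s : Finset H := htfin.toFinset with hs
  obtain ⟨ψ, hψ, habs⟩ := exists_locClass_subordinate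
    (prod_mem_locClass s g fun w _ => hg1 w)
  have hsmall : ∀ w ∈ s, ‖π (toCC ψ) w‖ < ε/8 := fun w hw =>
    hg2 w ψ hψ (factor_absorb s g (fun i _ => hg1 i) habs hw)
  have hπψ : ‖π (toCC ψ)‖ ≤ 1 :=
    (pi_norm_le π _).trans (norm_toCC_le zero_le_one fun y =>
      abs_le.mpr ⟨by linarith [(hψ.1 y).1], (hψ.1 y).2⟩)
  have hGu : ∀ u : H, ‖(π (toCC ψ) ∘L T) u‖ ≤ ε/4 * ‖u‖ := by
    intro u
    rcases eq_or_ne u 0 with rfl | hu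
    · simp
    · set u' : H := ((‖u‖⁻¹ : ℝ) : ℂ) • u with hu'
      have hnu : ‖u'‖ ≤ 1 := by
        rw [hu', norm_smul]
        simp only [Complex.norm_real, norm_inv, norm_norm]
        rw [inv_mul_cancel₀ (norm_ne_zero_iff.mpr hu)]
      have hmem : T u' ∈ closure (⇑T '' Metric.closedBall 0 1) :=
        subset_closure ⟨u', mem_closedBall_zero_iff.mpr hnu, rfl⟩
      obtain ⟨w, hw, hdist⟩ := Set.mem_iUnion₂.mp (htcover hmem)
      have hw' : w ∈ s := htfin.mem_toFinset.mpr hw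
      have hb : ‖T u' - w‖ < ε/8 := by
        rw [← dist_eq_norm]; exact Metric.mem_ball.mp hdist
      have hval : ‖π (toCC ψ) (T u')‖ ≤ ε/4 := by
        have h1 : π (toCC ψ) (T u') =
            π (toCC ψ) (T u' - w) + π (toCC ψ) w := by rw [← map_add, sub_add_cancel]
        calc ‖π (toCC ψ) (T u')‖
            ≤ ‖π (toCC ψ) (T u' - w)‖ + ‖π (toCC ψ) w‖ := by rw [h1]; exact norm_add_le _ _
          _ ≤ ‖π (toCC ψ)‖ * ‖T u' - w‖ + ε/8 := by
              gcongr
              · exact ContinuousLinearMap.le_opNorm _ _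
              · exact (hsmall w hw').le
          _ ≤ 1 * (ε/8) + ε/8 :=
              add_le_add (mul_le_mul hπψ hb.le (norm_nonneg _) zero_le_one) le_rfl
          _ = ε/4 := by ring
      have hueq : u = ((‖u‖ : ℝ) : ℂ) • u' := by
        rw [hu', smul_smul]
        norm_cast
        rw [mul_inv_cancel₀ (norm_ne_zero_iff.mpr hu)]
        simp
      calc ‖(π (toCC ψ) ∘L T) u‖ = ‖(π (toCC ψ) ∘L T) (((‖u‖ : ℝ) : ℂ) • u')‖ := by rw [← hueq]
        _ = ‖u‖ * ‖π (toCC ψ) (T u')‖ := by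
            rw [map_smul, norm_smul]
            simp [Complex.norm_real]
        _ ≤ ‖u‖ * (ε/4) := mul_le_mul_of_nonneg_left hval (norm_nonneg _)
        _ = ε/4 * ‖u‖ := mul_comm _ _
  have hGnorm : ‖π (toCC ψ) ∘L T‖ ≤ ε/4 :=
    ContinuousLinearMap.opNorm_le_bound _ (by linarith) hGu
  refine ⟨∑ _i : Fin 1, (1 : H →L[ℂ] H) ∘L π (1 - toCC ψ) ∘L T,
    ⟨1, fun _ => 1, fun _ => T, fun _ => 1 - toCC ψ,
      fun _ => one_mem_localOps π, fun _ => hT, fun _ => ?_, rfl⟩, ?_⟩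
  · simp only [ContinuousMap.sub_apply, ContinuousMap.one_apply]
    rw [show (toCC ψ) x = ((ψ x : ℝ) : ℂ) from rfl, locClass_one_at hψ]
    simp
  · rw [Fin.sum_univ_one, dist_eq_norm]
    have hb : (1 : H →L[ℂ] H) ∘L π (1 - toCC ψ) ∘L T = T - π (toCC ψ) ∘L T := by
      rw [map_sub, map_one]
      ext v
      simp [ContinuousLinearMap.sub_apply]
    rw [hb]
    have h2 : T - (T - π (toCC ψ) ∘L T) = π (toCC ψ) ∘L T := by abel
    rw [h2]
    calc ‖π (toCC ψ) ∘L T‖ ≤ ε/4 := hGnorm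
      _ < ε := by linarith

lemma key_point {x : X} (T : H →L[ℂ] H) (hTJ : T ∈ Jloc π x) {ε : ℝ} (hε : 0 < ε) :
    ∃ U : Set X, IsOpen U ∧ x ∈ U ∧
      ∀ σ θ : C(X,ℝ), tsupport ⇑σ ⊆ U → (∀ y, θ y ∈ Set.Icc (0:ℝ) 1) →
        (∀ y ∈ tsupport ⇑σ, θ y = 1) → (∀ y, y ∉ U → θ y = 0) →
        ∃ E K : H →L[ℂ] H, IsCompactOperator ⇑K ∧ ‖E‖ ≤ ε ∧
          π (toCC σ) * T * π (toCC σ) = π (toCC σ) * E * π (toCC σ) + K := by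
  obtain ⟨S, hS, hdS⟩ := Metric.mem_closure_iff.mp hTJ (ε/2) (by linarith)
  obtain ⟨n, A, B, φv, hA, hB, hφx, hSeq⟩ := hS
  rw [dist_eq_norm] at hdS
  set ε' : ℝ := ε / (2 * (n + 1)) with hε'
  have hε'pos : 0 < ε' := by positivity
  set U : Set X := ⋂ i : Fin n, {y | ‖A i‖ * ‖B i‖ * ‖φv i y‖ < ε'} with hU
  have hUo : IsOpen U := isOpen_iInter_of_finite fun i =>
    isOpen_lt (Continuous.mul continuous_const ((φv i).continuous.norm)) continuous_const
  have hUx : x ∈ U := Set.mem_iInter.mpr fun i => by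
    simp only [Set.mem_setOf_eq, hφx i, norm_zero, mul_zero]; exact hε'pos
  refine ⟨U, hUo, hUx, fun σ θ hσsupp hθ01 hθ1 hθ0 => ?_⟩
  set a : H →L[ℂ] H := π (toCC σ) with ha
  set E : H →L[ℂ] H := (T - S) + ∑ i, A i * (π (toCC θ * φv i) * B i) with hE
  set K : H →L[ℂ] H := ∑ i, (a * A i - A i * a) *
      ((π (φv i) - π (toCC θ * φv i)) * (B i * a)) with hK
  have hKc : IsCompactOperator ⇑K := by
    refine isCompactOperator_sum _ _ fun i _ => ?_
    refine isCompact_mul_right _ ?_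
    have h1 : a * A i - A i * a = -(A i ∘L π (toCC σ) - π (toCC σ) ∘L A i) := by
      rw [neg_sub]; rfl
    rw [h1]
    have h2 := (hA i (toCC σ)).neg
    rwa [show -⇑(A i ∘L π (toCC σ) - π (toCC σ) ∘L A i)
        = ⇑(-(A i ∘L π (toCC σ) - π (toCC σ) ∘L A i)) from rfl] at h2
  have hterm : ∀ i : Fin n, ‖A i * (π (toCC θ * φv i) * B i)‖ ≤ ε' := by
    intro i
    have hptw : ∀ y, ‖A i‖ * ‖B i‖ * ‖(toCC θ * φv i) y‖ ≤ ε' := by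
      intro y
      by_cases hy : y ∈ U
      · have hyi := (Set.mem_iInter.mp hy) i
        simp only [Set.mem_setOf_eq] at hyi
        have h3 : ‖(toCC θ * φv i) y‖ ≤ ‖φv i y‖ := by
          rw [ContinuousMap.mul_apply, norm_mul]
          have hθy : ‖(toCC θ) y‖ ≤ 1 := by
            simp only [toCC, ContinuousMap.coe_mk, Complex.norm_real]
            rw [Real.norm_eq_abs, abs_of_nonneg (hθ01 y).1]; exact (hθ01 y).2
          calc ‖(toCC θ) y‖ * ‖φv i y‖ ≤ 1 * ‖φv i y‖ :=
                mul_le_mul_of_nonneg_right hθy (norm_nonneg _)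
            _ = ‖φv i y‖ := one_mul _
        calc ‖A i‖ * ‖B i‖ * ‖(toCC θ * φv i) y‖ ≤ ‖A i‖ * ‖B i‖ * ‖φv i y‖ := by
              gcongr
          _ ≤ ε' := hyi.le
      · have h4 : θ y = 0 := hθ0 y hy
        simp only [ContinuousMap.mul_apply, toCC, ContinuousMap.coe_mk, h4,
          Complex.ofReal_zero, zero_mul, norm_zero, mul_zero]
        exact hε'pos.le
    set c : ℝ := ‖A i‖ * ‖B i‖ with hc
    have hcnn : 0 ≤ c := mul_nonneg (norm_nonneg _) (norm_nonneg _)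
    have hbound : c * ‖π (toCC θ * φv i)‖ ≤ ε' := by
      rcases eq_or_lt_of_le hcnn with h0 | h0
      · rw [← h0, zero_mul]; exact hε'pos.le
      · have hnle : ‖toCC θ * φv i‖ ≤ ε' / c := by
          rw [ContinuousMap.norm_le _ (le_of_lt (div_pos hε'pos h0))]
          intro y
          rw [le_div_iff₀ h0, mul_comm]
          exact hptw y
        calc c * ‖π (toCC θ * φv i)‖ ≤ c * ‖toCC θ * φv i‖ :=
              mul_le_mul_of_nonneg_left (pi_norm_le π _) hcnn
          _ ≤ c * (ε' / c) := mul_le_mul_of_nonneg_left hnle hcnn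
          _ = ε' := by field_simp
    calc ‖A i * (π (toCC θ * φv i) * B i)‖
        ≤ ‖A i‖ * (‖π (toCC θ * φv i)‖ * ‖B i‖) := by
          refine le_trans (norm_mul_le _ _) ?_
          exact mul_le_mul_of_nonneg_left (norm_mul_le _ _) (norm_nonneg _)
      _ = ‖A i‖ * ‖B i‖ * ‖π (toCC θ * φv i)‖ := by ring
      _ ≤ ε' := hbound
  have hEn : ‖E‖ ≤ ε := by
    have hsum : ‖∑ i, A i * (π (toCC θ * φv i) * B i)‖ ≤ n * ε' := by
      calc ‖∑ i, A i * (π (toCC θ * φv i) * B i)‖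
          ≤ ∑ i : Fin n, ‖A i * (π (toCC θ * φv i) * B i)‖ := norm_sum_le _ _
        _ ≤ ∑ _i : Fin n, ε' := Finset.sum_le_sum fun i _ => hterm i
        _ = n * ε' := by rw [Finset.sum_const, Finset.card_univ, Fintype.card_fin, nsmul_eq_mul]
    have hnε' : (n : ℝ) * ε' ≤ ε / 2 := by
      rw [hε', mul_div_assoc', div_le_div_iff₀ (by positivity) two_pos]
      nlinarith [hε.le, Nat.cast_nonneg (α := ℝ) n]
    calc ‖E‖ ≤ ‖T - S‖ + ‖∑ i, A i * (π (toCC θ * φv i) * B i)‖ := norm_add_le _ _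
      _ ≤ ε/2 + ε/2 := add_le_add hdS.le (hsum.trans hnε')
      _ = ε := by ring
  refine ⟨E, K, hKc, hEn, ?_⟩
  have hfun : ∀ i : Fin n, toCC σ * φv i = toCC σ * (toCC θ * φv i) := by
    intro i
    ext y
    simp only [ContinuousMap.mul_apply]
    by_cases hy : σ y = 0
    · simp [toCC, hy]
    · have hy' : y ∈ tsupport ⇑σ := subset_closure (by simp [Function.mem_support, hy])
      rw [show (toCC θ) y = ((θ y : ℝ) : ℂ) from rfl, hθ1 y hy']
      simp
  have h0 : ∀ i : Fin n, a * (π (φv i) - π (toCC θ * φv i)) = 0 := by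
    intro i
    rw [mul_sub, ha, ← map_mul, ← map_mul, hfun i, sub_self]
  have per_i : ∀ i : Fin n, a * (A i * (π (φv i) * B i)) * a
      = a * (A i * (π (toCC θ * φv i) * B i)) * a
        + (a * A i - A i * a) * ((π (φv i) - π (toCC θ * φv i)) * (B i * a)) :=
    fun i => move_lemma' a (A i) (π (φv i)) (π (toCC θ * φv i)) (B i) (h0 i)
  have hSeq' : S = ∑ i, A i * (π (φv i) * B i) := hSeq
  have hTeq : T = S + (T - S) := by abel
  calc a * T * a = a * (S + (T - S)) * a := by rw [← hTeq]
    _ = a * S * a + a * (T - S) * a := by noncomm_ring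
    _ = (∑ i, a * (A i * (π (φv i) * B i)) * a) + a * (T - S) * a := by
        rw [hSeq', Finset.mul_sum, Finset.sum_mul]
    _ = ((∑ i, a * (A i * (π (toCC θ * φv i) * B i)) * a) + K) + a * (T - S) * a := by
        rw [hK, ← Finset.sum_add_distrib]
        congr 1
        exact Finset.sum_congr rfl fun i _ => per_i i
    _ = a * E * a + K := by
        rw [hE, mul_add, add_mul, Finset.mul_sum, Finset.sum_mul]
        abel

lemma reverse_dir (T : H →L[ℂ] H) (hT : T ∈ localOps π) (h : ∀ x : X, T ∈ Jloc π x) :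
    IsCompactOperator ⇑T := by
  suffices happrox : ∀ ε : ℝ, 0 < ε → ∃ K : H →L[ℂ] H, IsCompactOperator ⇑K ∧ ‖T - K‖ ≤ ε by
    have hmem : T ∈ closure {S : H →L[ℂ] H | IsCompactOperator ⇑S} := by
      refine Metric.mem_closure_iff.mpr fun ε hε => ?_
      obtain ⟨K, hKc, hKn⟩ := happrox (ε/2) (by linarith)
      exact ⟨K, hKc, by rw [dist_eq_norm]; linarith⟩
    exact isClosed_setOf_isCompactOperator.closure_subset hmem
  intro ε hε
  classical
  choose U hUo hUx hkey using fun x : X => key_point π T (h x) hε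
  obtain ⟨t, ht⟩ := IsCompact.elim_finite_subcover isCompact_univ U hUo
    (fun y _ => Set.mem_iUnion.mpr ⟨y, hUx y⟩)
  set ι := {y : X // y ∈ t} with hι
  set U' : ι → Set X := fun j => U j.1 with hU'
  have hcov : (⋃ j, U' j) = Set.univ := by
    apply Set.eq_univ_of_univ_subset
    intro y hy
    obtain ⟨x, hx, hyx⟩ := Set.mem_iUnion₂.mp (ht (Set.mem_univ y))
    exact Set.mem_iUnion.mpr ⟨⟨x, hx⟩, hyx⟩
  obtain ⟨σ, hσ0, hσsupp, hσsum⟩ := exists_sq_partition U' (fun j => hUo j.1) hcov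
  choose θ hθ01 hθ1 hθ0 using fun j : ι =>
    exists_plateau (hUo j.1) (isClosed_tsupport ⇑(σ j)) (hσsupp j)
  choose E K hKc hEn heq using fun j : ι =>
    hkey j.1 (σ j) (θ j) (hσsupp j) (hθ01 j) (hθ1 j) (hθ0 j)
  set a : ι → (H →L[ℂ] H) := fun j => π (toCC (σ j)) with ha
  have hfun : (∑ j, toCC (σ j) * toCC (σ j)) = (1 : C(X,ℂ)) := by
    ext y
    simp only [ContinuousMap.coe_sum, Finset.sum_apply, ContinuousMap.mul_apply,
      ContinuousMap.one_apply, toCC, ContinuousMap.coe_mk]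
    have hy := hσsum y
    calc ∑ j, (((σ j) y : ℂ) * ((σ j) y : ℂ)) = ((∑ j, ((σ j) y)^2 : ℝ) : ℂ) := by
          push_cast; ring_nf
      _ = 1 := by rw [hy, Complex.ofReal_one]
  have hone : (∑ j, a j * a j) = (1 : H →L[ℂ] H) := by
    have h1 : (∑ j, a j * a j) = π (∑ j, toCC (σ j) * toCC (σ j)) := by
      rw [map_sum]
      exact Finset.sum_congr rfl fun j _ => (map_mul π _ _).symm
    rw [h1, hfun, map_one]
  have hsa : ∀ j (u v : H), ⟪a j u, v⟫_ℂ = ⟪u, a j v⟫_ℂ := fun j => pi_selfAdjoint π (σ j)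
  have hsumsq : ∀ u : H, ∑ j, ‖a j u‖ ^ 2 = ‖u‖ ^ 2 := by
    intro u
    calc ∑ j, ‖a j u‖ ^ 2 = ∑ j, Complex.re ⟪u, (a j * a j) u⟫_ℂ := by
          refine Finset.sum_congr rfl fun j _ => ?_
          exact ((inner_self_eq_norm_sq (𝕜 := ℂ) (a j u)).symm).trans
            (congrArg Complex.re (hsa j u (a j u)))
      _ = Complex.re ⟪u, (∑ j, a j * a j) u⟫_ℂ := by
          rw [ContinuousLinearMap.sum_apply, inner_sum, Complex.re_sum]
      _ = ‖u‖ ^ 2 := by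
          rw [hone, ContinuousLinearMap.one_apply]
          exact inner_self_eq_norm_sq (𝕜 := ℂ) u
  have hL : ∀ j : ι, IsCompactOperator ⇑(a j * T - T * a j) := by
    intro j
    have h2 := (hT (toCC (σ j))).neg
    have h3 : a j * T - T * a j = -(T ∘L π (toCC (σ j)) - π (toCC (σ j)) ∘L T) := by
      rw [neg_sub]; rfl
    rw [h3]
    rwa [show -⇑(T ∘L π (toCC (σ j)) - π (toCC (σ j)) ∘L T)
        = ⇑(-(T ∘L π (toCC (σ j)) - π (toCC (σ j)) ∘L T)) from rfl] at h2
  set Z : H →L[ℂ] H := ∑ j, a j * (E j * a j) with hZ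
  set Ktot : H →L[ℂ] H := (∑ j, K j) + ∑ j, a j * (a j * T - T * a j) with hKtot
  have hdecomp : T = Z + Ktot := by
    calc T = (∑ j, a j * a j) * T := by rw [hone, one_mul]
      _ = ∑ j, a j * a j * T := Finset.sum_mul _ _ _
      _ = ∑ j, (a j * T * a j + a j * (a j * T - T * a j)) :=
          Finset.sum_congr rfl fun j _ => by noncomm_ring
      _ = ∑ j, a j * T * a j + ∑ j, a j * (a j * T - T * a j) := Finset.sum_add_distrib
      _ = ∑ j, (a j * E j * a j + K j) + ∑ j, a j * (a j * T - T * a j) := by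
          rw [Finset.sum_congr rfl fun j _ => heq j]
      _ = (∑ j, a j * E j * a j + ∑ j, K j) + ∑ j, a j * (a j * T - T * a j) := by
          rw [Finset.sum_add_distrib]
      _ = Z + Ktot := by
          rw [hZ, hKtot]
          have h4 : ∑ j, a j * E j * a j = ∑ j, a j * (E j * a j) :=
            Finset.sum_congr rfl fun j _ => by rw [mul_assoc]
          rw [h4]
          abel
  have hKtotc : IsCompactOperator ⇑Ktot := by
    rw [hKtot, ContinuousLinearMap.coe_add']
    refine IsCompactOperator.add ?_ ?_
    · exact isCompactOperator_sum _ _ fun j _ => hKc j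
    · refine isCompactOperator_sum _ _ fun j _ => ?_
      exact (hL j).clm_comp (a j)
  have hZn : ‖Z‖ ≤ ε := sandwich_norm_le a E hε.le hsa hsumsq hEn
  refine ⟨Ktot, hKtotc, ?_⟩
  have h5 : T - Ktot = Z := by rw [hdecomp]; abel
  rw [h5]
  exact hZn

end Helpers

/-- Under the localization hypotheses, a local operator is compact if and
only if all of its local representatives `p_x(A) ∈ 𝒜/J_x` vanish, i.e. `A ∈ J_x` for all `x`. -/
theorem compact_iff_all_local_representatives_zero
    {X : Type*} [TopologicalSpace X] [CompactSpace X] [T2Space X]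
    {H : Type*} [NormedAddCommGroup H] [InnerProductSpace ℂ H] [CompleteSpace H]
    (π : C(X, ℂ) →⋆ₐ[ℂ] (H →L[ℂ] H)) (hπ : FaithfulNoCompact π) (hconv : LocStrongConv π)
    (T : H →L[ℂ] H) (hT : T ∈ localOps π) :
    IsCompactOperator ⇑T ↔ ∀ x : X, T ∈ Jloc π x := by
  constructor
  · intro hK x
    exact forward_dir π hconv T hT hK x
  · intro h
    exact reverse_dir π T hT h
end
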